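/- arXiv:1205.6359 — 5 statements merged into one kernel-verified Lean document; each statement's English description precedes it below -/
import Mathlib

section
/- Let (u,v) and (w,x) be two edges of a MUL-tree T lying on a path P_{u,x} = (u, v, …, w, x), and suppose both edges are informative (each resolves at least one quartet). Then Δ(u,v) ⊆ Δ(w,x) if and only if M_v^{uv} = M_x^{wx}. -/
open SimpleGraph

variable {V V' L L' : Type}

/-- Degree of a vertex, via `Set.ncard` of the neighbor set (no instances needed). -/
noncomputable def deg (G : SimpleGraph V) (v : V) : ℕ := (G.neighborSet v).ncard

/-- A leaf is a vertex of degree one. -/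
def IsLeaf (G : SimpleGraph V) (v : V) : Prop := deg G v = 1

/-- The vertex set of the subtree `T_u^{uv}`: vertices reachable from `u`
after deleting the edge `(u,v)`. -/
def side (G : SimpleGraph V) (u v : V) : Set V :=
  {w | (G.deleteEdges {s(u, v)}).Reachable w u}

/-- Labels appearing on leaves of the `u`-side of the edge `(u,v)`. -/
def sideLabels (G : SimpleGraph V) (ψ : V → L) (u v : V) : Set L :=
  {m | ∃ w, IsLeaf G w ∧ w ∈ side G u v ∧ ψ w = m}

/-- `M_u^{uv}`: labels appearing on leaves of `T_u^{uv}` but not of `T_v^{uv}`. -/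
def Mside (G : SimpleGraph V) (ψ : V → L) (u v : V) : Set L :=
  sideLabels G ψ u v \ sideLabels G ψ v u

/-- `C^{uv}`: labels appearing on leaves of both sides of the edge `(u,v)`. -/
def Cside (G : SimpleGraph V) (ψ : V → L) (u v : V) : Set L :=
  sideLabels G ψ u v ∩ sideLabels G ψ v u

/-- A quartet `ab|cd`: an unordered pair of unordered pairs of labels. -/
abbrev Quartet (L : Type) := Sym2 (Sym2 L)

/-- The edge `(u,v)` resolves the quartet `q = ab|cd` when `{a,b} ⊆ M_u^{uv}` and
`{c,d} ⊆ M_v^{uv}` (with `a,b,c,d` four distinct labels). -/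
def Resolves (G : SimpleGraph V) (ψ : V → L) (u v : V) (q : Quartet L) : Prop :=
  G.Adj u v ∧ ∃ a b c d : L, a ≠ b ∧ c ≠ d ∧
    a ∈ Mside G ψ u v ∧ b ∈ Mside G ψ u v ∧
    c ∈ Mside G ψ v u ∧ d ∈ Mside G ψ v u ∧
    q = s(s(a, b), s(c, d))

/-- `Δ(u,v)`: the set of quartets resolved by the edge `(u,v)`. -/
def Δ (G : SimpleGraph V) (ψ : V → L) (u v : V) : Set (Quartet L) :=
  {q | Resolves G ψ u v q}

/-- The information content `I(T)`: all quartets resolved by some edge. -/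
def infoContent (G : SimpleGraph V) (ψ : V → L) : Set (Quartet L) :=
  {q | ∃ u v, Resolves G ψ u v q}

/-- The label set `M`: labels carried by the leaves. -/
def labelSet (G : SimpleGraph V) (ψ : V → L) : Set L :=
  {m | ∃ v, IsLeaf G v ∧ ψ v = m}

/-- Singly labeled: the labeling map is injective on leaves. -/
def SinglyLabeled (G : SimpleGraph V) (ψ : V → L) : Prop :=
  ∀ v w, IsLeaf G v → IsLeaf G w → ψ v = ψ w → v = w

/-- A MUL-tree: a finite unrooted tree (encoded as the nontrivial connected component
of `G`; vertices outside `G.support` are unused isolated vertices) together with a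
labeling `ψ` of its leaves, such that every internal (non-leaf) node has degree ≥ 3.
The label set `M` is `labelSet G ψ`, onto which `ψ` (restricted to leaves) is
automatically surjective. -/
structure MulTree (V L : Type) : Type where
  G : SimpleGraph V
  ψ : V → L
  fin : Finite V
  acyclic : G.IsAcyclic
  conn : ∀ u ∈ G.support, ∀ v ∈ G.support, G.Reachable u v
  internal3 : ∀ v ∈ G.support, ¬ IsLeaf G v → 3 ≤ deg G v

/-- `y` lies on the (unique) path between `a` and `b`: `a,b` are connected and
every walk from `a` to `b` passes through `y`. -/
def OnPath (G : SimpleGraph V) (y a b : V) : Prop :=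
  G.Reachable a b ∧ ∀ p : G.Walk a b, y ∈ p.support

/-- The edges `(u,v)` and `(w,x)` lie, in this order, on the path
`P_{u,x} = (u, v, …, w, x)` (possibly `v = w`). -/
def PathConfig (G : SimpleGraph V) (u v w x : V) : Prop :=
  G.Adj u v ∧ G.Adj w x ∧ OnPath G v u x ∧ OnPath G w v x

/-- An internal edge: both endpoints are internal (non-leaf) nodes. -/
def InternalEdge (G : SimpleGraph V) (a b : V) : Prop :=
  G.Adj a b ∧ ¬ IsLeaf G a ∧ ¬ IsLeaf G b

/-- Contracting the edge `(a,b)`: identify `b` with `a` (the vertex `b` becomes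
an unused isolated vertex). -/
def contractEdge (G : SimpleGraph V) (a b : V) : SimpleGraph V where
  Adj x y := x ≠ y ∧ x ≠ b ∧ y ≠ b ∧
    (G.Adj x y ∨ (x = a ∧ G.Adj b y) ∨ (y = a ∧ G.Adj x b))
  symm := ⟨by
    rintro x y ⟨h1, h2, h3, h4 | ⟨hx, hy⟩ | ⟨hy, hx⟩⟩
    · exact ⟨h1.symm, h3, h2, Or.inl h4.symm⟩
    · exact ⟨h1.symm, h3, h2, Or.inr (Or.inr ⟨hx, hy.symm⟩)⟩
    · exact ⟨h1.symm, h3, h2, Or.inr (Or.inl ⟨hy, hx.symm⟩)⟩⟩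
  loopless := ⟨fun x h => h.1 rfl⟩

/-- `PruneSpec G v₀ G'` : `G'` is the result of pruning the leaf `v₀` from `G`:
delete `v₀` (i.e. its unique edge); if as a result the neighbor `u` of `v₀`
becomes a degree-two node, additionally delete `u` and connect its former two
other neighbors by an edge. Deleted vertices become unused isolated vertices. -/
def PruneSpec (G : SimpleGraph V) (v₀ : V) (G' : SimpleGraph V) : Prop :=
  ∃ u, G.neighborSet v₀ = {u} ∧
    ((deg G u ≠ 3 ∧ G' = G.deleteEdges {s(u, v₀)}) ∨
     (deg G u = 3 ∧ ∃ p q, p ≠ q ∧ p ≠ v₀ ∧ q ≠ v₀ ∧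
        G.neighborSet u = {v₀, p, q} ∧
        G' = G.deleteEdges {s(u, v₀), s(u, p), s(u, q)} ⊔ fromEdgeSet {s(p, q)}))

/-- A leaf is prunable if pruning it leaves the information content unchanged. -/
def Prunable (G : SimpleGraph V) (ψ : V → L) (v₀ : V) : Prop :=
  IsLeaf G v₀ ∧ ∃ G', PruneSpec G v₀ G' ∧ infoContent G' ψ = infoContent G ψ

/-- An internal edge is contractible if contracting it leaves the information
content unchanged. -/
def Contractible (G : SimpleGraph V) (ψ : V → L) (a b : V) : Prop :=
  InternalEdge G a b ∧ infoContent (contractEdge G a b) ψ = infoContent G ψ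

/-- Maximally reduced: no prunable leaf and no contractible internal edge. -/
def MaximallyReduced (G : SimpleGraph V) (ψ : V → L) : Prop :=
  (∀ v, ¬ Prunable G ψ v) ∧ (∀ a b, ¬ Contractible G ψ a b)

/-- One reduction step: prune a prunable leaf or contract a contractible
internal edge. -/
def ReduceStep (ψ : V → L) (G G' : SimpleGraph V) : Prop :=
  (∃ v₀, Prunable G ψ v₀ ∧ PruneSpec G v₀ G') ∨
  (∃ a b, Contractible G ψ a b ∧ G' = contractEdge G a b)

/-- `H` is a maximally reduced form (MRF) of `G`: obtained from `G` by repeatedly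
pruning prunable leaves and contracting contractible internal edges, until
neither operation is possible. -/
def IsMRF (ψ : V → L) (G H : SimpleGraph V) : Prop :=
  Relation.ReflTransGen (ReduceStep ψ) G H ∧ MaximallyReduced H ψ

/-- Label-preserving isomorphism of (leaf-labeled) trees: a graph isomorphism
between the supports mapping leaves to leaves and preserving leaf labels. -/
def LIso (G : SimpleGraph V) (ψ : V → L) (G' : SimpleGraph V') (ψ' : V' → L) : Prop :=
  ∃ f : G.support ≃ G'.support,
    (∀ x y : G.support, G'.Adj (f x).1 (f y).1 ↔ G.Adj x.1 y.1) ∧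
    (∀ x : G.support, IsLeaf G x.1 → IsLeaf G' (f x).1 ∧ ψ' (f x).1 = ψ x.1)

/-- The set of internal edges of `G`, as unordered pairs. -/
def internalEdgeSet (G : SimpleGraph V) : Set (Sym2 V) :=
  {e | ∃ a b, e = s(a, b) ∧ InternalEdge G a b}

/-- The subtree `T_z^{yz}` branches out from the path `P_{u,x}` :
`y` is an interior vertex of the path and `z` is off the path. -/
def BranchesOut (G : SimpleGraph V) (u x y z : V) : Prop :=
  G.Adj y z ∧ OnPath G y u x ∧ y ≠ u ∧ y ≠ x ∧ ¬ OnPath G z u x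

/-- Vertices of the minimal subtree spanning all leaves labeled `ℓ`. -/
def spanVerts (G : SimpleGraph V) (ψ : V → L) (ℓ : L) : Set V :=
  {p | ∃ c d, IsLeaf G c ∧ IsLeaf G d ∧ ψ c = ℓ ∧ ψ d = ℓ ∧ OnPath G p c d}

/-- Degree of `y` within the subtree induced on the vertex set `S`. -/
noncomputable def degIn (G : SimpleGraph V) (S : Set V) (y : V) : ℕ :=
  (G.neighborSet y ∩ S).ncard

/-- One step of deleting a leaf labeled `ℓ` (by pruning, with suppression). -/
def PruneLabelStep (ψ : V → L) (ℓ : L) (G G' : SimpleGraph V) : Prop :=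
  ∃ v₀, IsLeaf G v₀ ∧ ψ v₀ = ℓ ∧ PruneSpec G v₀ G'

section Aux

variable {G : SimpleGraph V}

/-- An edge of an acyclic graph is a bridge: endpoints not reachable after deletion. -/
lemma aux_not_reachable_delete (hac : G.IsAcyclic) {a b : V} (hab : G.Adj a b) :
    ¬ (G.deleteEdges {s(a, b)}).Reachable a b := by
  have hb := (isAcyclic_iff_forall_adj_isBridge.mp hac) hab
  exact isBridge_iff.mp hb

/-- Membership of a mapped (to a supergraph) walk's support. -/
lemma aux_mem_support_mapLe {G G' : SimpleGraph V} (h : G ≤ G') {a b y : V}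
    (p : G.Walk a b) : y ∈ (p.mapLe h).support ↔ y ∈ p.support := by
  simp [SimpleGraph.Walk.support_map]

/-- Any vertex connected (in `G`) to `a` lies on one of the two sides of the edge `(a,b)`. -/
lemma aux_mem_side_or {b z a : V} (p : G.Walk z a) :
    z ∈ side G a b ∨ z ∈ side G b a := by
  induction p with
  | nil => exact Or.inl (SimpleGraph.Reachable.refl _)
  | @cons z z' e hzz' q ih =>
    by_cases he : s(z, z') = s(e, b)
    · rcases Sym2.eq_iff.mp he with ⟨rfl, rfl⟩ | ⟨rfl, rfl⟩
      · exact Or.inl (SimpleGraph.Reachable.refl _)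
      · exact Or.inr (SimpleGraph.Reachable.refl _)
    · have hadj : (G.deleteEdges {s(e, b)}).Adj z z' := by
        rw [SimpleGraph.deleteEdges_adj]
        exact ⟨hzz', by simpa using he⟩
      have hadj' : (G.deleteEdges {s(b, e)}).Adj z z' := by
        rw [SimpleGraph.deleteEdges_adj]
        refine ⟨hzz', ?_⟩
        rw [show s(b, e) = s(e, b) from Sym2.eq_swap]
        simpa using he
      rcases ih with h' | h'
      · exact Or.inl (hadj.reachable.trans h')
      · exact Or.inr (hadj'.reachable.trans h')

/-- The two relevant sides determined by the two edges of a `PathConfig` are disjoint. -/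
lemma aux_sides_disjoint (hac : G.IsAcyclic) {u v w x : V} (h : PathConfig G u v w x)
    {z : V} (hz1 : z ∈ side G u v) (hz2 : z ∈ side G x w) : False := by
  classical
  obtain ⟨huv, hwx, ⟨_, hvpath⟩, ⟨_, hwpath⟩⟩ := h
  -- walks
  obtain ⟨p1⟩ := hz1.symm  -- walk u → z in G - uv
  obtain ⟨p2⟩ := hz2       -- walk z → x in G - wx
  set W : G.Walk u x :=
    (p1.mapLe (SimpleGraph.deleteEdges_le _)).append
      (p2.mapLe (SimpleGraph.deleteEdges_le _)) with hW
  have hv : v ∈ W.support := hvpath W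
  rw [SimpleGraph.Walk.mem_support_append_iff] at hv
  rcases hv with hv | hv
  · rw [aux_mem_support_mapLe] at hv
    have : (G.deleteEdges {s(u, v)}).Reachable u v := ⟨p1.takeUntil v hv⟩
    exact aux_not_reachable_delete hac huv this
  · rw [aux_mem_support_mapLe] at hv
    -- walk from v to x in G - wx
    have pv : (G.deleteEdges {s(x, w)}).Walk v x := p2.dropUntil v hv
    -- it must pass through w
    have hw : w ∈ (pv.mapLe (SimpleGraph.deleteEdges_le _)).support := hwpath _
    rw [aux_mem_support_mapLe] at hw
    have : (G.deleteEdges {s(x, w)}).Reachable w x := ⟨pv.dropUntil w hw⟩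
    exact aux_not_reachable_delete hac hwx.symm this.symm

lemma aux_reach_vw {u v w x : V} (h : PathConfig G u v w x) : G.Reachable v w := by
  classical
  obtain ⟨huv, hwx, ⟨_, _⟩, ⟨hr, hwpath⟩⟩ := h
  obtain ⟨p⟩ := hr
  exact ⟨p.takeUntil w (hwpath p)⟩

lemma aux_side_subset₁ (hac : G.IsAcyclic) {u v w x : V} (h : PathConfig G u v w x) :
    side G u v ⊆ side G w x := by
  intro z hz
  have hzu : G.Reachable z u := by
    obtain ⟨p⟩ := hz; exact ⟨p.mapLe (SimpleGraph.deleteEdges_le _)⟩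
  have hzw : G.Reachable z w :=
    (hzu.trans h.1.reachable).trans (aux_reach_vw h)
  obtain ⟨p⟩ := hzw
  rcases aux_mem_side_or p with h' | h'
  · exact h'
  · exact absurd h' (fun h'' => aux_sides_disjoint hac h hz h'')

lemma aux_side_subset₂ (hac : G.IsAcyclic) {u v w x : V} (h : PathConfig G u v w x) :
    side G x w ⊆ side G v u := by
  intro z hz
  have hzx : G.Reachable z x := by
    obtain ⟨p⟩ := hz; exact ⟨p.mapLe (SimpleGraph.deleteEdges_le _)⟩
  have hzv : G.Reachable z v :=
    (hzx.trans h.2.1.symm.reachable).trans (aux_reach_vw h).symm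
  obtain ⟨p⟩ := hzv
  rcases aux_mem_side_or p with h' | h'
  · exact h'
  · exact absurd hz (fun h'' => aux_sides_disjoint hac h h' h'')

lemma aux_sideLabels_mono {ψ : V → L} {a b c d : V} (hs : side G a b ⊆ side G c d) :
    sideLabels G ψ a b ⊆ sideLabels G ψ c d := by
  rintro m ⟨z, hz1, hz2, hz3⟩
  exact ⟨z, hz1, hs hz2, hz3⟩

/-- `M_u^{uv} ⊆ M_w^{wx}`. -/
lemma aux_Mside_mono₁ (hac : G.IsAcyclic) {ψ : V → L} {u v w x : V}
    (h : PathConfig G u v w x) : Mside G ψ u v ⊆ Mside G ψ w x := by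
  rintro m ⟨hm1, hm2⟩
  refine ⟨aux_sideLabels_mono (aux_side_subset₁ hac h) hm1, fun hm3 => ?_⟩
  exact hm2 (aux_sideLabels_mono (aux_side_subset₂ hac h) hm3)

/-- `M_x^{wx} ⊆ M_v^{uv}`. -/
lemma aux_Mside_mono₂ (hac : G.IsAcyclic) {ψ : V → L} {u v w x : V}
    (h : PathConfig G u v w x) : Mside G ψ x w ⊆ Mside G ψ v u := by
  rintro m ⟨hm1, hm2⟩
  refine ⟨aux_sideLabels_mono (aux_side_subset₂ hac h) hm1, fun hm3 => ?_⟩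
  exact hm2 (aux_sideLabels_mono (aux_side_subset₁ hac h) hm3)

end Aux

/-- For informative edges `(u,v)` and `(w,x)` on a path
`P_{u,x} = (u,v,…,w,x)`, `Δ(u,v) ⊆ Δ(w,x)` iff `M_v^{uv} = M_x^{wx}`. -/
theorem stmt2 (T : MulTree V L) (u v w x : V) (h : PathConfig T.G u v w x)
    (h1 : (Δ T.G T.ψ u v).Nonempty) (h2 : (Δ T.G T.ψ w x).Nonempty) :
    Δ T.G T.ψ u v ⊆ Δ T.G T.ψ w x ↔ Mside T.G T.ψ v u = Mside T.G T.ψ x w := by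
  have hac := T.acyclic
  constructor
  · -- Δ(u,v) ⊆ Δ(w,x) → M_v^{uv} = M_x^{wx}
    intro hsub
    refine Set.Subset.antisymm ?_ (aux_Mside_mono₂ hac h)
    intro c₀ hc₀
    -- produce a quartet in Δ(u,v) containing c₀ on the v-side
    obtain ⟨q, hq⟩ := h1
    obtain ⟨_, a, b, c, d, hab, hcd, ha, hb, hc, hd, _⟩ := hq
    -- pick d' ∈ {c,d} with d' ≠ c₀
    obtain ⟨d', hd', hd'c₀⟩ : ∃ d', d' ∈ Mside T.G T.ψ v u ∧ d' ≠ c₀ := by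
      by_cases hcc : c = c₀
      · exact ⟨d, hd, by rw [← hcc]; exact fun he => hcd he.symm⟩
      · exact ⟨c, hc, hcc⟩
    have hq' : s(s(a, b), s(c₀, d')) ∈ Δ T.G T.ψ u v :=
      ⟨h.1, a, b, c₀, d', hab, fun he => hd'c₀ he.symm, ha, hb, hc₀, hd', rfl⟩
    have hq'' := hsub hq'
    obtain ⟨_, a', b', c', d'', _, _, ha', hb', hc', hd'', heq⟩ := hq''
    rcases Sym2.eq_iff.mp heq with ⟨h1', h2'⟩ | ⟨h1', h2'⟩
    · -- s(c₀,d') = s(c',d'')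
      rcases Sym2.eq_iff.mp h2' with ⟨rfl, rfl⟩ | ⟨rfl, rfl⟩
      · exact hc'
      · exact hd''
    · -- cross case: s(a,b) = s(c',d'') forces a ∈ M_x^{wx} ⊆ M_v^{uv}, contradiction
      exfalso
      have haM : a ∈ Mside T.G T.ψ x w := by
        rcases Sym2.eq_iff.mp h1' with ⟨rfl, rfl⟩ | ⟨rfl, rfl⟩
        · exact hc'
        · exact hd''
      have haV : a ∈ Mside T.G T.ψ v u := aux_Mside_mono₂ hac h haM
      exact haV.2 ha.1
  · -- M_v^{uv} = M_x^{wx} → Δ(u,v) ⊆ Δ(w,x)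
    intro hM q hq
    obtain ⟨_, a, b, c, d, hab, hcd, ha, hb, hc, hd, rfl⟩ := hq
    exact ⟨h.2.1, a, b, c, d, hab, hcd,
      aux_Mside_mono₁ hac h ha, aux_Mside_mono₁ hac h hb,
      hM ▸ hc, hM ▸ hd, rfl⟩
end

section
/- Let (u,v) and (w,x) be two edges of a MUL-tree T lying on a path P_{u,x} = (u, v, …, w, x), all edges on this path being informative, and suppose Δ(u,v) ⊆ Δ(w,x). Then for every edge (y,z) on P_{u,x} oriented so that v is on the same side of (y,z) as u (i.e., y lies between v and z on the path), one has Δ(u,v) ⊆ Δ(y,z) ⊆ Δ(w,x). -/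
open SimpleGraph

variable {V V' L L' : Type}

section Stmt3Helpers

variable {G : SimpleGraph V}

private lemma side_refl' (u v : V) : u ∈ side G u v := Reachable.refl u

private lemma reach_of_mem_side' {u v t : V} (h : t ∈ side G u v) : G.Reachable t u :=
  Reachable.mono (deleteEdges_le _) h

private lemma side_of_reach' {u v t t' : V} (h : t ∈ side G u v)
    (h2 : (G.deleteEdges {s(u, v)}).Reachable t' t) : t' ∈ side G u v := h2.trans h

private lemma reach_of_mem_support' {H : SimpleGraph V} {a b t : V} (W : H.Walk a b)
    (ht : t ∈ W.support) : H.Reachable t b := by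
  classical
  exact ⟨W.dropUntil t ht⟩

private lemma bridge_disj (hac : G.IsAcyclic) {p q : V} (hpq : G.Adj p q) :
    ¬ (G.deleteEdges {s(p, q)}).Reachable p q := by
  have hb := (isAcyclic_iff_forall_edge_isBridge.mp hac) (G.mem_edgeSet.mpr hpq)
  exact isBridge_iff.mp hb

private lemma mem_side' {u v t : V} :
    t ∈ side G u v ↔ (G.deleteEdges {s(u, v)}).Reachable t u := Iff.rfl

private lemma not_both_sides (hac : G.IsAcyclic) {p q t : V} (hpq : G.Adj p q)
    (h1 : t ∈ side G p q) (h2 : t ∈ side G q p) : False := by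
  have h1' := mem_side'.mp h1
  have h2' := mem_side'.mp h2
  rw [(Sym2.eq_swap : s(q, p) = s(p, q))] at h2'
  exact bridge_disj hac hpq (h1'.symm.trans h2')

private lemma side_split (q : V) :
    ∀ {t p : V}, G.Reachable t p → t ∈ side G p q ∨ t ∈ side G q p := by
  intro t p hr
  obtain ⟨W⟩ := hr
  induction W with
  | nil => exact Or.inl (side_refl' _ _)
  | @cons a b p hab W ih =>
    by_cases he : s(a, b) = s(p, q)
    · rcases Sym2.eq_iff.mp he with ⟨rfl, rfl⟩ | ⟨rfl, rfl⟩
      · exact Or.inl (side_refl' _ _)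
      · exact Or.inr (side_refl' _ _)
    · have had : (G.deleteEdges {s(p, q)}).Adj a b :=
        deleteEdges_adj.mpr ⟨hab, by simpa using he⟩
      have had2 : (G.deleteEdges {s(q, p)}).Adj a b := by
        refine deleteEdges_adj.mpr ⟨hab, ?_⟩
        rw [Set.mem_singleton_iff, (Sym2.eq_swap : s(q, p) = s(p, q))]
        exact he
      rcases ih with h | h
      · exact Or.inl (side_of_reach' h had.reachable)
      · exact Or.inr (side_of_reach' h had2.reachable)

private lemma side_cross (hac : G.IsAcyclic) {p q : V} (hpq : G.Adj p q) :
    ∀ {t r : V} (W : G.Walk t r), t ∈ side G p q → r ∈ side G q p →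
      p ∈ W.support ∧ q ∈ W.support := by
  intro t r W
  induction W with
  | nil => exact fun ht hr => (not_both_sides hac hpq ht hr).elim
  | @cons a b _ hab W ih =>
    intro ht hr
    by_cases he : s(a, b) = s(p, q)
    · rcases Sym2.eq_iff.mp he with ⟨rfl, rfl⟩ | ⟨rfl, rfl⟩
      · constructor
        · rw [SimpleGraph.Walk.support_cons]; exact List.mem_cons_self
        · rw [SimpleGraph.Walk.support_cons]
          exact List.mem_cons_of_mem _ W.start_mem_support
      · exact (not_both_sides hac hpq ht (mem_side'.mpr (Reachable.refl _))).elim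
    · have had : (G.deleteEdges {s(p, q)}).Adj b a :=
        deleteEdges_adj.mpr ⟨hab.symm, by simpa [Sym2.eq_swap] using he⟩
      have hb : b ∈ side G p q := side_of_reach' ht had.reachable
      obtain ⟨h1, h2⟩ := ih hb hr
      rw [SimpleGraph.Walk.support_cons]
      exact ⟨List.mem_cons_of_mem _ h1, List.mem_cons_of_mem _ h2⟩

private lemma side_ord (hac : G.IsAcyclic) {p q a : V} (hpq : G.Adj p q)
    (h1 : G.Reachable a q) (h2 : ∀ W : G.Walk a q, p ∈ W.support) :
    a ∈ side G p q := by
  classical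
  obtain ⟨W0⟩ := h1
  set P := W0.toPath with hP
  have hp : p ∈ (P : G.Walk a q).support := h2 _
  have hsupp : (P : G.Walk a q).support
      = ((P : G.Walk a q).takeUntil p hp).support
        ++ ((P : G.Walk a q).dropUntil p hp).support.tail := by
    conv_lhs => rw [← SimpleGraph.Walk.take_spec (P : G.Walk a q) hp]
    exact SimpleGraph.Walk.support_append _ _
  have hnd : ((P : G.Walk a q)).support.Nodup := P.2.support_nodup
  rw [hsupp] at hnd
  have hqtail : q ∈ ((P : G.Walk a q).dropUntil p hp).support.tail :=
    SimpleGraph.Walk.end_mem_tail_support_of_ne hpq.ne _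
  have hqnot : q ∉ ((P : G.Walk a q).takeUntil p hp).support := by
    intro hq
    exact (List.disjoint_of_nodup_append hnd) hq hqtail
  refine mem_side'.mpr ⟨(((P : G.Walk a q).takeUntil p hp).transfer (G.deleteEdges {s(p, q)}) ?_)⟩
  intro e he
  rw [edgeSet_deleteEdges]
  refine ⟨SimpleGraph.Walk.edges_subset_edgeSet _ he, ?_⟩
  intro hmem
  rw [Set.mem_singleton_iff] at hmem
  subst hmem
  exact hqnot (SimpleGraph.Walk.snd_mem_support_of_mem_edges _ he)

private lemma two_onpath {u v x : V} (huv : u ≠ v) (hr : G.Reachable u x)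
    (h1 : ∀ W : G.Walk u x, v ∈ W.support) (h2 : ∀ W : G.Walk v x, u ∈ W.support) :
    False := by
  classical
  obtain ⟨W0⟩ := hr
  set P := W0.toPath with hP
  have hv : v ∈ (P : G.Walk u x).support := h1 _
  have hu : u ∈ ((P : G.Walk u x).dropUntil v hv).support := h2 _
  have hutail : u ∈ ((P : G.Walk u x).dropUntil v hv).support.tail := by
    have := SimpleGraph.Walk.support_eq_cons ((P : G.Walk u x).dropUntil v hv)
    rw [this] at hu
    rcases List.mem_cons.mp hu with h | h
    · exact absurd h huv
    · exact h
  have hsupp : (P : G.Walk u x).support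
      = ((P : G.Walk u x).takeUntil v hv).support
        ++ ((P : G.Walk u x).dropUntil v hv).support.tail := by
    conv_lhs => rw [← SimpleGraph.Walk.take_spec (P : G.Walk u x) hv]
    exact SimpleGraph.Walk.support_append _ _
  have hnd : ((P : G.Walk u x)).support.Nodup := P.2.support_nodup
  rw [hsupp] at hnd
  exact (List.disjoint_of_nodup_append hnd)
    (((P : G.Walk u x).takeUntil v hv).start_mem_support) hutail

private lemma penult (hac : G.IsAcyclic) {a x y w : V} (P : G.Walk a x) (hP : P.IsPath)
    (hyx : G.Adj y x) (hwx : G.Adj w x) (hy : y ∈ P.support) (hw : w ∈ P.support) :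
    y = w := by
  classical
  have key : ∀ (c : V) (hc : G.Adj c x) (hcP : c ∈ P.support),
      P.support = (P.takeUntil c hcP).support ++ [x] := by
    intro c hc hcP
    have h1 : P.dropUntil c hcP = SimpleGraph.Walk.cons hc SimpleGraph.Walk.nil := by
      have := hac.path_unique ⟨P.dropUntil c hcP, hP.dropUntil hcP⟩ (Path.singleton hc)
      exact congrArg Subtype.val this
    conv_lhs => rw [← SimpleGraph.Walk.take_spec P hcP]
    rw [SimpleGraph.Walk.support_append, h1]
    simp
  have e1 := key y hyx hy
  have e2 := key w hwx hw
  have e3 : (P.takeUntil y hy).support = (P.takeUntil w hw).support :=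
    (List.append_inj' (e1.symm.trans e2) rfl).1
  have gy : (P.takeUntil y hy).support.getLast? = some y := by
    rw [List.getLast?_eq_getLast (SimpleGraph.Walk.support_ne_nil _),
      SimpleGraph.Walk.getLast_support]
  have gw : (P.takeUntil w hw).support.getLast? = some w := by
    rw [List.getLast?_eq_getLast (SimpleGraph.Walk.support_ne_nil _),
      SimpleGraph.Walk.getLast_support]
  rw [e3, gw] at gy
  exact (Option.some_injective _ gy).symm

private lemma main_incl (hac : G.IsAcyclic) {p q r s a : V} (hpq : G.Adj p q)
    (hrs : G.Adj r s) (hne : s(p, q) ≠ s(r, s)) (hq : q ∈ side G r s)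
    (ha1 : a ∈ side G q p) (ha2 : a ∈ side G s r) :
    side G p q ⊆ side G r s ∧ side G s r ⊆ side G q p := by
  have hpadj : (G.deleteEdges {s(r, s)}).Adj p q :=
    deleteEdges_adj.mpr ⟨hpq, by simpa using hne⟩
  have hp : p ∈ side G r s := side_of_reach' hq hpadj.reachable
  have hsF : s ∈ side G p q → False := by
    intro hs
    obtain ⟨Wa⟩ := mem_side'.mp ha2
    have hWed : ∀ e ∈ Wa.reverse.edges, e ∈ G.edgeSet := fun e he =>
      edgeSet_mono (deleteEdges_le _) (SimpleGraph.Walk.edges_subset_edgeSet _ he)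
    have hcr := side_cross hac hpq (Wa.reverse.transfer G hWed) hs ha1
    have hqs : q ∈ Wa.support := by
      have := hcr.2
      rw [SimpleGraph.Walk.support_transfer, SimpleGraph.Walk.support_reverse] at this
      exact List.mem_reverse.mp this
    have : q ∈ side G s r := mem_side'.mpr (reach_of_mem_support' Wa hqs)
    exact not_both_sides hac hrs hq this
  constructor
  · intro t ht
    obtain ⟨W0⟩ := mem_side'.mp ht
    by_cases he : s(r, s) ∈ W0.edges
    · exact absurd (mem_side'.mpr (reach_of_mem_support' W0
        (SimpleGraph.Walk.snd_mem_support_of_mem_edges W0 he))) (fun h => hsF h)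
    · have hWed : ∀ e ∈ W0.edges, e ∈ (G.deleteEdges {s(r, s)}).edgeSet := by
        intro e he'
        rw [edgeSet_deleteEdges]
        refine ⟨edgeSet_mono (deleteEdges_le _)
          (SimpleGraph.Walk.edges_subset_edgeSet _ he'), ?_⟩
        intro hmem
        rw [Set.mem_singleton_iff] at hmem
        exact he (hmem ▸ he')
      exact side_of_reach' hp ⟨W0.transfer _ hWed⟩
  · have hs' : s ∈ side G q p := by
      have hreach : G.Reachable s q :=
        (reach_of_mem_side' ha2).symm.trans (reach_of_mem_side' ha1)
      rcases side_split p hreach with h | h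
      · exact h
      · exact (hsF h).elim
    intro t ht
    obtain ⟨W0⟩ := mem_side'.mp ht
    by_cases he : s(p, q) ∈ W0.edges
    · have : q ∈ side G s r := mem_side'.mpr (reach_of_mem_support' W0
        (SimpleGraph.Walk.snd_mem_support_of_mem_edges W0 he))
      exact (not_both_sides hac hrs hq this).elim
    · have hWed : ∀ e ∈ W0.edges, e ∈ (G.deleteEdges {s(q, p)}).edgeSet := by
        intro e he'
        rw [edgeSet_deleteEdges]
        refine ⟨edgeSet_mono (deleteEdges_le _)
          (SimpleGraph.Walk.edges_subset_edgeSet _ he'), ?_⟩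
        intro hmem
        rw [Set.mem_singleton_iff] at hmem
        rw [hmem] at he'
        exact he (by rw [(Sym2.eq_swap : s(p, q) = s(q, p))]; exact he')
      exact side_of_reach' hs' ⟨W0.transfer _ hWed⟩

private lemma sideLabels_mono {ψ : V → L} {u v y z : V}
    (h : side G u v ⊆ side G y z) : sideLabels G ψ u v ⊆ sideLabels G ψ y z := by
  rintro m ⟨t, ht, ht2, rfl⟩
  exact ⟨t, ht, h ht2, rfl⟩

private lemma delta_part1 {ψ : V → L} {u v w x y z : V}
    (hyz : G.Adj y z)
    (F1 : sideLabels G ψ u v ⊆ sideLabels G ψ y z)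
    (F2 : sideLabels G ψ z y ⊆ sideLabels G ψ v u)
    (F3 : sideLabels G ψ y z ⊆ sideLabels G ψ w x)
    (F4 : sideLabels G ψ x w ⊆ sideLabels G ψ z y)
    (hsub : Δ G ψ u v ⊆ Δ G ψ w x) :
    Δ G ψ u v ⊆ Δ G ψ y z := by
  rintro Q hQ
  obtain ⟨huv, a, b, c, d, hab, hcd, haM, hbM, hcM, hdM, rfl⟩ := hQ
  obtain ⟨-, a', b', c', d', -, -, ha', hb', hc', hd', hEq⟩ :=
    hsub ⟨huv, a, b, c, d, hab, hcd, haM, hbM, hcM, hdM, rfl⟩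
  rcases Sym2.eq_iff.mp hEq with ⟨h1, h2⟩ | ⟨h1, h2⟩
  · have haW : a ∈ Mside G ψ w x := by
      rcases Sym2.eq_iff.mp h1 with ⟨rfl, rfl⟩ | ⟨rfl, rfl⟩ <;> assumption
    have hcW : c ∈ Mside G ψ x w := by
      rcases Sym2.eq_iff.mp h2 with ⟨rfl, rfl⟩ | ⟨rfl, rfl⟩ <;> assumption
    have hdW : d ∈ Mside G ψ x w := by
      rcases Sym2.eq_iff.mp h2 with ⟨rfl, rfl⟩ | ⟨rfl, rfl⟩ <;> assumption
    have hbW : b ∈ Mside G ψ w x := by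
      rcases Sym2.eq_iff.mp h1 with ⟨rfl, rfl⟩ | ⟨rfl, rfl⟩ <;> assumption
    exact ⟨hyz, a, b, c, d, hab, hcd,
      ⟨F1 haM.1, fun hcon => haM.2 (F2 hcon)⟩,
      ⟨F1 hbM.1, fun hcon => hbM.2 (F2 hcon)⟩,
      ⟨F4 hcW.1, fun hcon => hcW.2 (F3 hcon)⟩,
      ⟨F4 hdW.1, fun hcon => hdW.2 (F3 hcon)⟩, rfl⟩
  · have haX : a ∈ Mside G ψ x w := by
      rcases Sym2.eq_iff.mp h1 with ⟨rfl, rfl⟩ | ⟨rfl, rfl⟩ <;> assumption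
    exact absurd (F2 (F4 haX.1)) haM.2

private lemma delta_part2 {ψ : V → L} {u v w x y z : V}
    (huv : G.Adj u v) (hwx : G.Adj w x)
    (F1 : sideLabels G ψ u v ⊆ sideLabels G ψ y z)
    (F2 : sideLabels G ψ z y ⊆ sideLabels G ψ v u)
    (F3 : sideLabels G ψ y z ⊆ sideLabels G ψ w x)
    (F4 : sideLabels G ψ x w ⊆ sideLabels G ψ z y)
    (hsub : Δ G ψ u v ⊆ Δ G ψ w x)
    (hEx : (Δ G ψ u v).Nonempty) :
    Δ G ψ y z ⊆ Δ G ψ w x := by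
  rintro Q hQ
  obtain ⟨-, a', b', c', d', ha'b', hc'd', ha', hb', hc', hd', rfl⟩ := hQ
  have hA : a' ∈ Mside G ψ w x := ⟨F3 ha'.1, fun hcon => ha'.2 (F4 hcon)⟩
  have hB : b' ∈ Mside G ψ w x := ⟨F3 hb'.1, fun hcon => hb'.2 (F4 hcon)⟩
  have hC : c' ∈ Mside G ψ v u := ⟨F2 hc'.1, fun hcon => hc'.2 (F1 hcon)⟩
  have hD : d' ∈ Mside G ψ v u := ⟨F2 hd'.1, fun hcon => hd'.2 (F1 hcon)⟩
  obtain ⟨q0, hq0⟩ := hEx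
  obtain ⟨-, a, b, c0, d0, hab, -, haU, hbU, -, -, -⟩ := hq0
  have h1 : s(s(a, b), s(c', d')) ∈ Δ G ψ w x :=
    hsub ⟨huv, a, b, c', d', hab, hc'd', haU, hbU, hC, hD, rfl⟩
  obtain ⟨-, a2, b2, c2, d2, -, -, ha2, hb2, hc2, hd2, hEq⟩ := h1
  rcases Sym2.eq_iff.mp hEq with ⟨h1', h2'⟩ | ⟨h1', h2'⟩
  · have hCx : c' ∈ Mside G ψ x w := by
      rcases Sym2.eq_iff.mp h2' with ⟨rfl, rfl⟩ | ⟨rfl, rfl⟩ <;> assumption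
    have hDx : d' ∈ Mside G ψ x w := by
      rcases Sym2.eq_iff.mp h2' with ⟨rfl, rfl⟩ | ⟨rfl, rfl⟩ <;> assumption
    exact ⟨hwx, a', b', c', d', ha'b', hc'd', hA, hB, hCx, hDx, rfl⟩
  · have haX : a ∈ Mside G ψ x w := by
      rcases Sym2.eq_iff.mp h1' with ⟨rfl, rfl⟩ | ⟨rfl, rfl⟩ <;> assumption
    exact absurd (F2 (F4 haX.1)) haU.2

end Stmt3Helpers

/-- If `(u,v)` and `(w,x)` lie on a path `P_{u,x}`, all edges on this
path are informative, and `Δ(u,v) ⊆ Δ(w,x)`, then for every edge `(y,z)` on the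
path oriented so that `v` is on the same side of `(y,z)` as `u`,
`Δ(u,v) ⊆ Δ(y,z) ⊆ Δ(w,x)`. -/
theorem stmt3 (T : MulTree V L) (u v w x : V) (h : PathConfig T.G u v w x)
    (hall : ∀ p q : V, T.G.Adj p q → OnPath T.G p u x → OnPath T.G q p x →
      (Δ T.G T.ψ p q).Nonempty)
    (hsub : Δ T.G T.ψ u v ⊆ Δ T.G T.ψ w x)
    (y z : V) (hyz : T.G.Adj y z) (hy : OnPath T.G y u x) (hz : OnPath T.G z y x)
    (hv : v ∈ side T.G y z) :
    Δ T.G T.ψ u v ⊆ Δ T.G T.ψ y z ∧ Δ T.G T.ψ y z ⊆ Δ T.G T.ψ w x := by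
  classical
  obtain ⟨huv, hwx, hOv, hOw⟩ := h
  have hac := T.acyclic
  by_cases hE2 : s(y, z) = s(w, x)
  · rcases Sym2.eq_iff.mp hE2 with ⟨rfl, rfl⟩ | ⟨rfl, rfl⟩
    · exact ⟨hsub, fun _ hq => hq⟩
    · -- y = x, z = w : hz gives w ∈ support of nil walk x → x
      have := hz.2 SimpleGraph.Walk.nil
      rw [SimpleGraph.Walk.support_nil, List.mem_singleton] at this
      exact absurd this.symm hwx.ne'
  by_cases hE1 : s(u, v) = s(y, z)
  · rcases Sym2.eq_iff.mp hE1 with ⟨rfl, rfl⟩ | ⟨rfl, rfl⟩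
    · exact ⟨fun _ hq => hq, hsub⟩
    · -- u = z, v = y : contradiction
      exact (two_onpath huv.ne hOv.1 hOv.2 hz.2).elim
  -- main case
  have hrux : T.G.Reachable u x := hOv.1
  have hyx : T.G.Reachable y x := by
    obtain ⟨P0⟩ := hrux
    exact reach_of_mem_support' P0 (hy.2 P0)
  have hxvu : x ∈ side T.G v u := by
    refine side_ord hac huv.symm hrux.symm ?_
    intro W
    have := hOv.2 W.reverse
    rwa [SimpleGraph.Walk.support_reverse, List.mem_reverse] at this
  have hxzy : x ∈ side T.G z y := by
    refine side_ord hac hyz.symm hyx.symm ?_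
    intro W
    have := hz.2 W.reverse
    rwa [SimpleGraph.Walk.support_reverse, List.mem_reverse] at this
  have hvwx : v ∈ side T.G w x :=
    side_ord hac hwx (huv.symm.reachable.trans hrux) hOw.2
  have hzwx : z ∈ side T.G w x := by
    have hzw : T.G.Reachable z w :=
      (hyz.symm.reachable.trans hyx).trans hwx.reachable.symm
    rcases side_split x hzw with hgood | hbad
    · exact hgood
    · exfalso
      by_cases hzx : z = x
      · subst hzx
        obtain ⟨W1⟩ := hrux
        set P := W1.toPath with hPdef
        have hyP : y ∈ (P : T.G.Walk u z).support := hy.2 _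
        have hvP : v ∈ (P : T.G.Walk u z).support := hOv.2 _
        have hwP : w ∈ (P : T.G.Walk u z).support :=
          SimpleGraph.Walk.support_dropUntil_subset _ hvP
            (hOw.2 ((P : T.G.Walk u z).dropUntil v hvP))
        exact hE2 (by rw [penult hac (P : T.G.Walk u z) P.2 hyz hwx hyP hwP])
      · obtain ⟨W1⟩ := mem_side'.mp hv
        have hWed : ∀ e ∈ W1.reverse.edges, e ∈ T.G.edgeSet := fun e he =>
          edgeSet_mono (deleteEdges_le _) (SimpleGraph.Walk.edges_subset_edgeSet _ he)
        set WG : T.G.Walk z v :=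
          SimpleGraph.Walk.cons hyz.symm (W1.reverse.transfer T.G hWed) with hWG
        have hxs : x ∈ WG.support := (side_cross hac hwx.symm WG hbad hvwx).1
        rw [hWG, SimpleGraph.Walk.support_cons] at hxs
        rcases List.mem_cons.mp hxs with h' | h'
        · exact hzx h'.symm
        · rw [SimpleGraph.Walk.support_transfer, SimpleGraph.Walk.support_reverse,
            List.mem_reverse] at h'
          exact not_both_sides hac hyz (mem_side'.mpr (reach_of_mem_support' W1 h')) hxzy
  obtain ⟨F1s, F2s⟩ := main_incl hac huv hyz hE1 hv hxvu hxzy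
  obtain ⟨F3s, F4s⟩ := main_incl hac hyz hwx hE2 hzwx hxzy (side_refl' x w)
  have F1 := sideLabels_mono (ψ := T.ψ) F1s
  have F2 := sideLabels_mono (ψ := T.ψ) F2s
  have F3 := sideLabels_mono (ψ := T.ψ) F3s
  have F4 := sideLabels_mono (ψ := T.ψ) F4s
  have hEx : (Δ T.G T.ψ u v).Nonempty :=
    hall u v huv ⟨hrux, fun p => p.start_mem_support⟩ ⟨hrux, hOv.2⟩
  exact ⟨delta_part1 hyz F1 F2 F3 F4 hsub, delta_part2 huv hwx F1 F2 F3 F4 hsub hEx⟩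
end

section
/- In a maximally reduced MUL-tree T, every internal edge resolves some quartet that is resolved by no other edge of T. -/
open SimpleGraph

variable {V V' L L' : Type}

section Aux
variable {V L : Type}

private lemma tri_free {G : SimpleGraph V} (hG : G.IsAcyclic) {u v w : V}
    (h1 : G.Adj u v) (h2 : G.Adj v w) (h3 : G.Adj u w) : False := by
  have hb := (isAcyclic_iff_forall_adj_isBridge.mp hG) h1
  rw [isBridge_iff] at hb
  refine hb ?_
  have ha1 : (G \ fromEdgeSet {s(u, v)}).Adj u w := by
    simp only [sdiff_adj, fromEdgeSet_adj, Set.mem_singleton_iff]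
    refine ⟨h3, ?_⟩
    rintro ⟨he, -⟩
    rw [Sym2.eq_iff] at he
    rcases he with ⟨-, h⟩ | ⟨h, -⟩
    · exact G.loopless.irrefl v (h ▸ h2)
    · exact G.loopless.irrefl v (h ▸ h1)
  have ha2 : (G \ fromEdgeSet {s(u, v)}).Adj w v := by
    simp only [sdiff_adj, fromEdgeSet_adj, Set.mem_singleton_iff]
    refine ⟨h2.symm, ?_⟩
    rintro ⟨he, -⟩
    rw [Sym2.eq_iff] at he
    rcases he with ⟨h, -⟩ | ⟨h, -⟩
    · exact G.loopless.irrefl u (h ▸ h3)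
    · exact G.loopless.irrefl v (h ▸ h2)
  exact (ha1.reachable).trans ha2.reachable

open scoped Classical in
/-- The vertex map of contracting `(u,v)` : send `v` to `u`. -/
noncomputable def cmap (u v x : V) : V := if x = v then u else x

lemma cmap_eq_of_ne {u v x : V} (h : x ≠ v) : cmap u v x = x := if_neg h
lemma cmap_v {u v : V} : cmap u v v = u := if_pos rfl
lemma cmap_ne_v {u v x : V} (huv : u ≠ v) : cmap u v x ≠ v := by
  unfold cmap; split <;> [exact huv; assumption]
lemma cmap_inj {u v p q : V} (huv : u ≠ v) (h : cmap u v p = cmap u v q) :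
    p = q ∨ (p = u ∧ q = v) ∨ (p = v ∧ q = u) := by
  unfold cmap at h
  split at h <;> split at h <;> simp_all

private lemma contract_adj {G : SimpleGraph V} {u v x y : V} :
    (contractEdge G u v).Adj x y ↔ x ≠ y ∧ x ≠ v ∧ y ≠ v ∧
      (G.Adj x y ∨ (x = u ∧ G.Adj v y) ∨ (y = u ∧ G.Adj x v)) := Iff.rfl

/-- mapped-edge-is-not-the-deleted-edge core case bash. -/
private lemma aux_ne {G : SimpleGraph V} (hG : G.IsAcyclic) {u v y z a b : V}
    (huv : G.Adj u v) (hyz : G.Adj y z) (hab : G.Adj a b)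
    (h1 : s(a, b) ≠ s(y, z)) (h2 : s(a, b) ≠ s(u, v))
    (hay : cmap u v a = cmap u v y) (hbz : cmap u v b = cmap u v z) : False := by
  rcases cmap_inj huv.ne hay with rfl | ⟨rfl, rfl⟩ | ⟨rfl, rfl⟩
  · rcases cmap_inj huv.ne hbz with rfl | ⟨rfl, rfl⟩ | ⟨rfl, rfl⟩
    · exact h1 rfl
    · exact tri_free hG huv hyz.symm hab.symm
    · exact tri_free hG huv hab.symm hyz.symm
  · rcases cmap_inj huv.ne hbz with rfl | ⟨rfl, rfl⟩ | ⟨rfl, rfl⟩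
    · exact tri_free hG huv hyz hab
    · exact G.loopless.irrefl _ hab
    · exact h2 rfl
  · rcases cmap_inj huv.ne hbz with rfl | ⟨rfl, rfl⟩ | ⟨rfl, rfl⟩
    · exact tri_free hG huv hab hyz
    · exact h2 Sym2.eq_swap
    · exact G.loopless.irrefl _ hab

/-- forward step: an undeleted `G`-edge maps to a reachability in the contracted,
edge-deleted graph. -/
private lemma step_fwd {G : SimpleGraph V} (hG : G.IsAcyclic) {u v y z a b : V}
    (huv : G.Adj u v) (hyz : G.Adj y z) (hne : s(y, z) ≠ s(u, v))
    (hab : G.Adj a b) (hdel : s(a, b) ≠ s(y, z)) :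
    ((contractEdge G u v).deleteEdges {s(cmap u v y, cmap u v z)}).Reachable
      (cmap u v a) (cmap u v b) := by
  by_cases hcase : s(a, b) = s(u, v)
  · rcases Sym2.eq_iff.mp hcase with ⟨rfl, rfl⟩ | ⟨rfl, rfl⟩
    · rw [cmap_eq_of_ne huv.ne, cmap_v]
    · rw [cmap_eq_of_ne huv.ne, cmap_v]
  · refine Adj.reachable ?_
    rw [deleteEdges_adj]
    constructor
    · rw [contract_adj]
      refine ⟨?_, cmap_ne_v huv.ne, cmap_ne_v huv.ne, ?_⟩
      · intro h
        rcases cmap_inj huv.ne h with rfl | ⟨rfl, rfl⟩ | ⟨rfl, rfl⟩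
        · exact G.loopless.irrefl _ hab
        · exact hcase rfl
        · exact hcase Sym2.eq_swap
      · by_cases hav : a = v
        · subst hav
          rw [cmap_v, cmap_eq_of_ne hab.ne']
          exact Or.inr (Or.inl ⟨rfl, hab⟩)
        · by_cases hbv : b = v
          · subst hbv
            rw [cmap_v, cmap_eq_of_ne hab.ne]
            exact Or.inr (Or.inr ⟨rfl, hab⟩)
          · rw [cmap_eq_of_ne hav, cmap_eq_of_ne hbv]
            exact Or.inl hab
    · intro hmem
      rw [Set.mem_singleton_iff, Sym2.eq_iff] at hmem
      rcases hmem with ⟨hay, hbz⟩ | ⟨haz, hby⟩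
      · exact aux_ne hG huv hyz hab hdel hcase hay hbz
      · exact aux_ne hG huv hyz.symm hab
          (fun h => hdel (h.trans Sym2.eq_swap)) hcase haz hby

private lemma reach_fwd {G : SimpleGraph V} (hG : G.IsAcyclic) {u v y z : V}
    (huv : G.Adj u v) (hyz : G.Adj y z) (hne : s(y, z) ≠ s(u, v)) {p q : V}
    (h : (G.deleteEdges {s(y, z)}).Reachable p q) :
    ((contractEdge G u v).deleteEdges {s(cmap u v y, cmap u v z)}).Reachable
      (cmap u v p) (cmap u v q) := by
  obtain ⟨w⟩ := h
  induction w with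
  | nil => exact Reachable.refl _
  | cons ha _ ih =>
      rw [deleteEdges_adj, Set.mem_singleton_iff] at ha
      exact (step_fwd hG huv hyz hne ha.1 ha.2).trans ih

/-- backward step: an edge of the contracted graph lifts to a reachability in `G`. -/
private lemma step_bwd {G : SimpleGraph V} {u v y z a b : V}
    (huv : G.Adj u v) (hne : s(y, z) ≠ s(u, v))
    (ha : ((contractEdge G u v).deleteEdges {s(cmap u v y, cmap u v z)}).Adj a b) :
    (G.deleteEdges {s(y, z)}).Reachable a b := by
  rw [deleteEdges_adj, Set.mem_singleton_iff, contract_adj] at ha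
  obtain ⟨⟨hne_ab, hav, hbv, hcase⟩, hdel⟩ := ha
  have huvH : (G.deleteEdges {s(y, z)}).Adj u v := by
    rw [deleteEdges_adj, Set.mem_singleton_iff]
    exact ⟨huv, fun h => hne h.symm⟩
  rcases hcase with hGab | ⟨hau, hvb⟩ | ⟨hbu, hva⟩
  · refine Adj.reachable ?_
    rw [deleteEdges_adj, Set.mem_singleton_iff]
    refine ⟨hGab, fun h => hdel ?_⟩
    rcases Sym2.eq_iff.mp h with ⟨rfl, rfl⟩ | ⟨rfl, rfl⟩
    · rw [cmap_eq_of_ne hav, cmap_eq_of_ne hbv]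
    · rw [cmap_eq_of_ne hbv, cmap_eq_of_ne hav]; exact Sym2.eq_swap
  · -- a = u, G.Adj v b : go u - v - b
    have hvbH : (G.deleteEdges {s(y, z)}).Adj v b := by
      rw [deleteEdges_adj, Set.mem_singleton_iff]
      refine ⟨hvb, fun h => hdel ?_⟩
      rcases Sym2.eq_iff.mp h with ⟨rfl, rfl⟩ | ⟨rfl, rfl⟩
      · rw [hau, cmap_v, cmap_eq_of_ne hbv]
      · rw [hau, cmap_v, cmap_eq_of_ne hbv]; exact Sym2.eq_swap
    rw [hau]
    exact huvH.reachable.trans hvbH.reachable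
  · -- b = u, G.Adj a v : go a - v - u
    have havH : (G.deleteEdges {s(y, z)}).Adj a v := by
      rw [deleteEdges_adj, Set.mem_singleton_iff]
      refine ⟨hva, fun h => hdel ?_⟩
      rcases Sym2.eq_iff.mp h with ⟨rfl, rfl⟩ | ⟨rfl, rfl⟩
      · rw [hbu, cmap_v, cmap_eq_of_ne hav]
      · rw [hbu, cmap_v, cmap_eq_of_ne hav]; exact Sym2.eq_swap
    rw [hbu]
    exact havH.reachable.trans huvH.reachable.symm

private lemma reach_bwd {G : SimpleGraph V} {u v y z : V}
    (huv : G.Adj u v) (hne : s(y, z) ≠ s(u, v)) {p q : V}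
    (h : ((contractEdge G u v).deleteEdges {s(cmap u v y, cmap u v z)}).Reachable p q) :
    (G.deleteEdges {s(y, z)}).Reachable p q := by
  obtain ⟨w⟩ := h
  induction w with
  | nil => exact Reachable.refl _
  | cons ha _ ih => exact (step_bwd huv hne ha).trans ih


private lemma deg_contract_of_ne {G : SimpleGraph V} [Finite V] (hG : G.IsAcyclic)
    {u v w : V} (huv : G.Adj u v) (hwu : w ≠ u) (hwv : w ≠ v) :
    deg (contractEdge G u v) w = deg G w := by
  by_cases hadj : G.Adj w v
  · have hNu : u ∉ G.neighborSet w \ {v} := by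
      rintro ⟨hu, -⟩
      exact tri_free hG huv hadj.symm (Adj.symm hu)
    have hset : (contractEdge G u v).neighborSet w = insert u (G.neighborSet w \ {v}) := by
      ext x
      simp only [mem_neighborSet, contract_adj, Set.mem_insert_iff, Set.mem_diff,
        Set.mem_singleton_iff]
      constructor
      · rintro ⟨hwx, -, hxv, hGwx | ⟨hwu', -⟩ | ⟨rfl, -⟩⟩
        · exact Or.inr ⟨hGwx, hxv⟩
        · exact absurd hwu' hwu
        · exact Or.inl rfl
      · rintro (rfl | ⟨hGwx, hxv⟩)
        · exact ⟨hwu, hwv, huv.ne, Or.inr (Or.inr ⟨rfl, hadj⟩)⟩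
        · exact ⟨hGwx.ne, hwv, hxv, Or.inl hGwx⟩
    rw [deg, deg, hset, Set.ncard_insert_of_notMem hNu (Set.toFinite _)]
    exact Set.ncard_diff_singleton_add_one hadj (Set.toFinite _)
  · have hset : (contractEdge G u v).neighborSet w = G.neighborSet w := by
      ext x
      simp only [mem_neighborSet, contract_adj]
      constructor
      · rintro ⟨hwx, hwv', hxv, hGwx | ⟨hwu', -⟩ | ⟨-, hv⟩⟩
        · exact hGwx
        · exact absurd hwu' hwu
        · exact absurd hv hadj
      · intro hGwx
        exact ⟨hGwx.ne, hwv, fun h => hadj (h ▸ hGwx), Or.inl hGwx⟩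
    rw [deg, deg, hset]

private lemma leaf_contract {G : SimpleGraph V} [Finite V] (hG : G.IsAcyclic) {u v : V}
    (huv : G.Adj u v) (hu3 : 3 ≤ deg G u) (hlu : ¬ IsLeaf G u) (hlv : ¬ IsLeaf G v)
    (w : V) : IsLeaf (contractEdge G u v) w ↔ IsLeaf G w := by
  by_cases hwv : w = v
  · subst hwv
    have hset : (contractEdge G u w).neighborSet w = ∅ := by
      ext x
      simp only [mem_neighborSet, contract_adj, Set.mem_empty_iff_false, iff_false]
      rintro ⟨-, h, -, -⟩
      exact h rfl
    refine iff_of_false (fun h => ?_) hlv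
    rw [IsLeaf, deg, hset, Set.ncard_empty] at h
    omega
  · by_cases hwu : w = u
    · subst hwu
      refine iff_of_false (fun h => ?_) hlu
      have hsub : G.neighborSet w \ {v} ⊆ (contractEdge G w v).neighborSet w := by
        rintro x ⟨hx, hxv⟩
        exact ⟨(Adj.ne hx), huv.ne, hxv, Or.inl hx⟩
      have h2 : 2 ≤ (G.neighborSet w \ {v}).ncard := by
        have := Set.ncard_diff_singleton_add_one (show v ∈ G.neighborSet w from huv)
          (Set.toFinite _)
        rw [deg] at hu3
        omega
      have h3 := Set.ncard_le_ncard hsub (Set.toFinite _)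
      rw [IsLeaf, deg] at h
      omega
    · rw [IsLeaf, IsLeaf, deg_contract_of_ne hG huv hwu hwv]

private lemma sideLabels_contract {G : SimpleGraph V} [Finite V] (ψ : V → L)
    (hG : G.IsAcyclic) {u v : V} (huv : G.Adj u v) (hu3 : 3 ≤ deg G u)
    (hlu : ¬ IsLeaf G u) (hlv : ¬ IsLeaf G v)
    {y z : V} (hyz : G.Adj y z) (hne : s(y, z) ≠ s(u, v)) :
    sideLabels (contractEdge G u v) ψ (cmap u v y) (cmap u v z) = sideLabels G ψ y z := by
  have hcy : (G.deleteEdges {s(y, z)}).Reachable (cmap u v y) y := by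
    by_cases h : y = v
    · subst h
      rw [cmap_v]
      refine Adj.reachable ?_
      rw [deleteEdges_adj, Set.mem_singleton_iff]
      exact ⟨huv, fun h => hne h.symm⟩
    · rw [cmap_eq_of_ne h]
  ext m
  simp only [sideLabels, Set.mem_setOf_eq, side]
  constructor
  · rintro ⟨w, hwleaf, hr, rfl⟩
    exact ⟨w, (leaf_contract hG huv hu3 hlu hlv w).mp hwleaf,
      (reach_bwd huv hne hr).trans hcy, rfl⟩
  · rintro ⟨w, hwleaf, hr, rfl⟩
    have hwv : w ≠ v := fun h => hlv (h ▸ hwleaf)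
    refine ⟨w, (leaf_contract hG huv hu3 hlu hlv w).mpr hwleaf, ?_, rfl⟩
    have h2 := reach_fwd hG huv hyz hne hr
    rwa [cmap_eq_of_ne hwv] at h2

private lemma resolves_transfer {G G' : SimpleGraph V} {ψ : V → L} {y z y' z' : V}
    {q : Quartet L} (hadj : G'.Adj y' z')
    (h1 : sideLabels G ψ y z = sideLabels G' ψ y' z')
    (h2 : sideLabels G ψ z y = sideLabels G' ψ z' y')
    (h : Resolves G ψ y z q) : Resolves G' ψ y' z' q := by
  have e1 : Mside G ψ y z = Mside G' ψ y' z' := by rw [Mside, Mside, h1, h2]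
  have e2 : Mside G ψ z y = Mside G' ψ z' y' := by rw [Mside, Mside, h1, h2]
  obtain ⟨-, a, b, c, d, hab, hcd, ha, hb, hc, hd, rfl⟩ := h
  exact ⟨hadj, a, b, c, d, hab, hcd, e1 ▸ ha, e1 ▸ hb, e2 ▸ hc, e2 ▸ hd, rfl⟩

private lemma resolves_contract {G : SimpleGraph V} [Finite V] {ψ : V → L}
    (hG : G.IsAcyclic) {u v : V} (huv : G.Adj u v) (hu3 : 3 ≤ deg G u)
    (hlu : ¬ IsLeaf G u) (hlv : ¬ IsLeaf G v) {y z : V} (hne : s(y, z) ≠ s(u, v))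
    {q : Quartet L} (h : Resolves G ψ y z q) :
    Resolves (contractEdge G u v) ψ (cmap u v y) (cmap u v z) q := by
  have hyz : G.Adj y z := h.1
  have hne' : s(z, y) ≠ s(u, v) := fun h => hne (Sym2.eq_swap.trans h)
  have hadj : (contractEdge G u v).Adj (cmap u v y) (cmap u v z) := by
    rw [contract_adj]
    refine ⟨?_, cmap_ne_v huv.ne, cmap_ne_v huv.ne, ?_⟩
    · intro hc
      rcases cmap_inj huv.ne hc with rfl | ⟨rfl, rfl⟩ | ⟨rfl, rfl⟩
      · exact G.loopless.irrefl _ hyz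
      · exact hne rfl
      · exact hne Sym2.eq_swap
    · by_cases hyv : y = v
      · subst hyv
        rw [cmap_v, cmap_eq_of_ne hyz.ne']
        exact Or.inr (Or.inl ⟨rfl, hyz⟩)
      · by_cases hzv : z = v
        · subst hzv
          rw [cmap_v, cmap_eq_of_ne hyz.ne]
          exact Or.inr (Or.inr ⟨rfl, hyz⟩)
        · rw [cmap_eq_of_ne hyv, cmap_eq_of_ne hzv]
          exact Or.inl hyz
  exact resolves_transfer hadj
    (sideLabels_contract ψ hG huv hu3 hlu hlv hyz hne).symm
    (sideLabels_contract ψ hG huv hu3 hlu hlv hyz.symm hne').symm h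

private lemma resolves_back {G : SimpleGraph V} [Finite V] {ψ : V → L}
    (hG : G.IsAcyclic) {u v : V} (huv : G.Adj u v) (hu3 : 3 ≤ deg G u)
    (hlu : ¬ IsLeaf G u) (hlv : ¬ IsLeaf G v) {a b : V} {q : Quartet L}
    (h : Resolves (contractEdge G u v) ψ a b q) : q ∈ infoContent G ψ := by
  have hadj := h.1
  rw [contract_adj] at hadj
  obtain ⟨hne_ab, hav, hbv, hcase⟩ := hadj
  rcases hcase with hGab | ⟨hau, hvb⟩ | ⟨hbu, hva⟩
  · have hne : s(a, b) ≠ s(u, v) := by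
      intro hEq
      rcases Sym2.eq_iff.mp hEq with ⟨-, h2⟩ | ⟨h2, -⟩
      · exact hbv h2
      · exact hav h2
    have hne' : s(b, a) ≠ s(u, v) := fun hEq => hne (Sym2.eq_swap.trans hEq)
    have e1 := sideLabels_contract ψ hG huv hu3 hlu hlv hGab hne
    have e2 := sideLabels_contract ψ hG huv hu3 hlu hlv hGab.symm hne'
    rw [cmap_eq_of_ne hav, cmap_eq_of_ne hbv] at e1
    rw [cmap_eq_of_ne hbv, cmap_eq_of_ne hav] at e2
    exact ⟨a, b, resolves_transfer hGab e1 e2 h⟩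
  · -- a = u, so (a,b) corresponds to the G-edge (v,b)
    have hne : s(v, b) ≠ s(u, v) := by
      intro hEq
      rcases Sym2.eq_iff.mp hEq with ⟨h1, -⟩ | ⟨-, h2⟩
      · exact huv.ne h1.symm
      · exact hne_ab (hau.trans h2.symm)
    have hne' : s(b, v) ≠ s(u, v) := fun hEq => hne (Sym2.eq_swap.trans hEq)
    have e1 := sideLabels_contract ψ hG huv hu3 hlu hlv hvb hne
    have e2 := sideLabels_contract ψ hG huv hu3 hlu hlv hvb.symm hne'
    rw [cmap_v, cmap_eq_of_ne hbv] at e1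
    rw [cmap_v, cmap_eq_of_ne hbv] at e2
    have h' := h
    rw [hau] at h'
    exact ⟨v, b, resolves_transfer hvb e1 e2 h'⟩
  · -- b = u, so (a,b) corresponds to the G-edge (a,v)
    have hne : s(a, v) ≠ s(u, v) := by
      intro hEq
      rcases Sym2.eq_iff.mp hEq with ⟨h1, -⟩ | ⟨h1, -⟩
      · exact hne_ab (h1.trans hbu.symm)
      · exact hav h1
    have hne' : s(v, a) ≠ s(u, v) := fun hEq => hne (Sym2.eq_swap.trans hEq)
    have e1 := sideLabels_contract ψ hG huv hu3 hlu hlv hva hne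
    have e2 := sideLabels_contract ψ hG huv hu3 hlu hlv hva.symm hne'
    rw [cmap_v, cmap_eq_of_ne hav] at e1
    rw [cmap_v, cmap_eq_of_ne hav] at e2
    have h' := h
    rw [hbu] at h'
    exact ⟨a, v, resolves_transfer hva e1 e2 h'⟩

end Aux

/-- In a maximally reduced MUL-tree, every internal edge resolves
some quartet that is resolved by no other edge. -/
theorem stmt4 (T : MulTree V L) (hmr : MaximallyReduced T.G T.ψ)
    (u v : V) (h : InternalEdge T.G u v) :
    ∃ q ∈ Δ T.G T.ψ u v, ∀ y z : V, Resolves T.G T.ψ y z q → s(y, z) = s(u, v) := by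
  haveI := T.fin
  obtain ⟨huv, hlu, hlv⟩ := h
  have hG := T.acyclic
  have hu3 : 3 ≤ deg T.G u := T.internal3 u ((mem_support _).mpr ⟨v, huv⟩) hlu
  have hsub : infoContent (contractEdge T.G u v) T.ψ ⊆ infoContent T.G T.ψ := by
    rintro q ⟨a, b, hr⟩
    exact resolves_back hG huv hu3 hlu hlv hr
  have hnoteq : infoContent (contractEdge T.G u v) T.ψ ≠ infoContent T.G T.ψ :=
    fun hEq => hmr.2 u v ⟨⟨huv, hlu, hlv⟩, hEq⟩
  obtain ⟨q, hqG, hqn⟩ : ∃ q, q ∈ infoContent T.G T.ψ ∧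
      q ∉ infoContent (contractEdge T.G u v) T.ψ := by
    by_contra hcon
    push_neg at hcon
    exact hnoteq (Set.Subset.antisymm hsub hcon)
  have huniq : ∀ y z, Resolves T.G T.ψ y z q → s(y, z) = s(u, v) := by
    intro y z hr
    by_contra hne
    exact hqn ⟨_, _, resolves_contract hG huv hu3 hlu hlv hne hr⟩
  obtain ⟨y, z, hr⟩ := hqG
  rcases Sym2.eq_iff.mp (huniq y z hr) with ⟨rfl, rfl⟩ | ⟨rfl, rfl⟩
  · exact ⟨q, hr, huniq⟩
  · obtain ⟨hadj, a, b, c, d, hab, hcd, ha, hb, hc, hd, hq⟩ := hr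
    exact ⟨q, ⟨hadj.symm, c, d, a, b, hcd, hab, hc, hd, ha, hb,
      hq.trans Sym2.eq_swap⟩, huniq⟩
end

section
/- In a MUL-tree T, the set of edges resolving a fixed quartet q = ab|cd forms a path: if edges (u,v) and (w,x) both resolve q, oriented so that {a,b} ⊆ M_u^{uv} and {a,b} ⊆ M_w^{wx}, then every edge on the path in T between (u,v) and (w,x) also resolves q. -/
open SimpleGraph

variable {V V' L L' : Type}

/-! ### Auxiliary lemmas for `stmt16` -/

lemma side_self (G : SimpleGraph V) (u v : V) : u ∈ side G u v := Reachable.refl u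

lemma side_graph_swap (G : SimpleGraph V) (u v : V) :
    G.deleteEdges {s(u, v)} = G.deleteEdges {s(v, u)} := by
  rw [Sym2.eq_swap]

lemma side_disjoint {G : SimpleGraph V} (hac : G.IsAcyclic) {u v : V} (h : G.Adj u v)
    {p : V} (h1 : p ∈ side G u v) (h2 : p ∈ side G v u) : False := by
  have hb := (isAcyclic_iff_forall_adj_isBridge.mp hac) h
  rw [isBridge_iff] at hb
  have h2' : (G.deleteEdges {s(u, v)}).Reachable p v := by
    rw [side_graph_swap]; exact h2
  exact hb (h1.symm.trans h2')

lemma reach_cover {G : SimpleGraph V} {u v p : V} (h : G.Reachable p u) :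
    p ∈ side G u v ∨ p ∈ side G v u := by
  obtain ⟨W⟩ := h
  induction W with
  | nil => exact Or.inl (Reachable.refl _)
  | @cons p q r h' W ih =>
    by_cases he : s(p, q) = s(r, v)
    · rcases Sym2.eq_iff.mp he with ⟨rfl, rfl⟩ | ⟨rfl, rfl⟩
      · exact Or.inl (Reachable.refl _)
      · exact Or.inr (Reachable.refl _)
    · rcases ih with hq | hq
      · refine Or.inl (Reachable.trans ?_ hq)
        exact (Adj.reachable (by simp [deleteEdges_adj, h', he]))
      · refine Or.inr (Reachable.trans ?_ hq)
        refine Adj.reachable (u := p) (v := q) ?_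
        rw [deleteEdges_adj]
        refine ⟨h', ?_⟩
        simp only [Set.mem_singleton_iff]
        rw [Sym2.eq_swap (a := v)]
        exact he

lemma leaf_mem_support {G : SimpleGraph V} {p : V} (h : IsLeaf G p) : p ∈ G.support := by
  have hne : (G.neighborSet p).Nonempty := by
    apply Set.nonempty_of_ncard_ne_zero
    rw [show (G.neighborSet p).ncard = 1 from h]
    exact one_ne_zero
  obtain ⟨q, hq⟩ := hne
  exact ⟨q, hq⟩

/-- If a walk in a subgraph `H ≤ G` joins the two sides of an edge `(y,z)` of the
acyclic graph `G`, then it passes through `y` and `z`. -/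
lemma cross_aux {G : SimpleGraph V} (hac : G.IsAcyclic) {y z : V} (hyz : G.Adj y z)
    {H : SimpleGraph V} (hH : H ≤ G) {s t : V}
    (hs : s ∈ side G y z) (ht : t ∈ side G z y) (W : H.Walk s t) :
    H.Reachable s y ∧ H.Reachable s z := by
  classical
  have hmem : s(y, z) ∈ W.edges := by
    by_contra hne
    have hsub : ∀ e ∈ W.edges, e ∈ (G.deleteEdges {s(y, z)}).edgeSet := by
      intro e he
      rw [edgeSet_deleteEdges]
      refine ⟨edgeSet_subset_edgeSet.mpr hH (W.edges_subset_edgeSet he), ?_⟩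
      intro hmem
      rw [Set.mem_singleton_iff] at hmem
      subst hmem
      exact hne he
    have : (G.deleteEdges {s(y, z)}).Reachable s t := ⟨W.transfer _ hsub⟩
    exact side_disjoint hac hyz (this.symm.trans hs) ht
  have hy : y ∈ W.support := W.fst_mem_support_of_mem_edges hmem
  have hz : z ∈ W.support := W.snd_mem_support_of_mem_edges hmem
  exact ⟨⟨W.takeUntil y hy⟩, ⟨W.takeUntil z hz⟩⟩

/-- Key lemma: if `u` is on the `y`-side of `(y,z)` while some point of the
`u`-side of `(u,v)` is on the `z`-side, then the whole `v`-side of `(u,v)` is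
contained in the `y`-side of `(y,z)`. -/
lemma key_side {G : SimpleGraph V} (hac : G.IsAcyclic) {u v y z : V}
    (huv : G.Adj u v) (hyz : G.Adj y z) (hu : u ∈ side G y z)
    {p : V} (hp1 : p ∈ side G u v) (hp2 : p ∈ side G z y) :
    side G v u ⊆ side G y z := by
  classical
  have hH : G.deleteEdges {s(u, v)} ≤ G := deleteEdges_le _
  have hW := (hp1 : (G.deleteEdges {s(u, v)}).Reachable p u)
  obtain ⟨W⟩ := hW
  obtain ⟨hrz, hry⟩ := cross_aux hac hyz.symm hH hp2 hu W
  have hyuv : y ∈ side G u v := hry.symm.trans hp1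
  have hzuv : z ∈ side G u v := hrz.symm.trans hp1
  have hvy : v ≠ y := by
    rintro rfl
    exact side_disjoint hac huv hyuv (side_self G _ _)
  have hvz : v ≠ z := by
    rintro rfl
    exact side_disjoint hac huv hzuv (side_self G _ _)
  have huz : u ≠ z := by
    rintro rfl
    exact side_disjoint hac hyz hu (side_self G _ _)
  have hedge : s(u, v) ≠ s(y, z) := by
    intro h
    rcases Sym2.eq_iff.mp h with ⟨h1, h2⟩ | ⟨h1, h2⟩
    · exact hvz h2
    · exact huz h1
  have hvyz : v ∈ side G y z := by
    refine Reachable.trans ?_ (hu : (G.deleteEdges {s(y, z)}).Reachable u y)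
    refine Adj.reachable ?_
    rw [deleteEdges_adj]
    exact ⟨huv.symm, by simpa [Sym2.eq_swap (a := v) (b := u)] using hedge⟩
  intro t ht
  have ht' : (G.deleteEdges {s(u, v)}).Reachable t v := by
    rw [side_graph_swap]; exact ht
  obtain ⟨W'⟩ := ht'
  have hne : s(y, z) ∉ W'.edges := by
    intro hin
    have hy' : y ∈ W'.support := W'.fst_mem_support_of_mem_edges hin
    have : (G.deleteEdges {s(u, v)}).Reachable y v :=
      Reachable.trans (Reachable.symm ⟨W'.takeUntil y hy'⟩) ⟨W'⟩
    refine side_disjoint hac huv hyuv ?_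
    show (G.deleteEdges {s(v, u)}).Reachable y v
    rw [← side_graph_swap]
    exact this
  have hsub : ∀ e ∈ W'.edges, e ∈ (G.deleteEdges {s(y, z)}).edgeSet := by
    intro e he
    rw [edgeSet_deleteEdges]
    refine ⟨edgeSet_subset_edgeSet.mpr hH (W'.edges_subset_edgeSet he), ?_⟩
    intro hmem
    rw [Set.mem_singleton_iff] at hmem
    subst hmem
    exact hne he
  have : (G.deleteEdges {s(y, z)}).Reachable t v := ⟨W'.transfer _ hsub⟩
  exact this.trans hvyz

lemma mkMside {G : SimpleGraph V} (hac : G.IsAcyclic) {ψ : V → L} {α β : V}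
    (h : G.Adj α β) {m : L} {pm : V} (hl : IsLeaf G pm) (hψ : ψ pm = m)
    (hall : ∀ q, IsLeaf G q → ψ q = m → q ∈ side G α β) : m ∈ Mside G ψ α β := by
  refine ⟨⟨pm, hl, hall pm hl hψ, hψ⟩, ?_⟩
  rintro ⟨q, hql, hqs, hqψ⟩
  exact side_disjoint hac h (hall q hql hqψ) hqs

lemma extract_cd {G : SimpleGraph V} {ψ : V → L} {u v : V} {a b c d : L}
    (h : Resolves G ψ u v (s(s(a, b), s(c, d)))) (ha : a ∈ Mside G ψ u v) :
    c ∈ Mside G ψ v u ∧ d ∈ Mside G ψ v u := by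
  obtain ⟨-, a', b', c', d', -, -, ha', hb', hc', hd', heq⟩ := h
  rcases Sym2.eq_iff.mp heq with ⟨h1, h2⟩ | ⟨h1, h2⟩
  · rcases Sym2.eq_iff.mp h2 with ⟨hc, hd⟩ | ⟨hc, hd⟩
    · exact ⟨hc ▸ hc', hd ▸ hd'⟩
    · exact ⟨hc ▸ hd', hd ▸ hc'⟩
  · exfalso
    rcases Sym2.eq_iff.mp h1 with ⟨hA, -⟩ | ⟨hA, -⟩
    · exact ha.2 (hA ▸ hc').1
    · exact ha.2 (hA ▸ hd').1


/-- The edges resolving a fixed quartet `q = ab|cd` form a path: if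
`(u,v)` and `(w,x)` both resolve `q`, oriented so that `{a,b} ⊆ M_u^{uv}` and
`{a,b} ⊆ M_w^{wx}`, then every edge `(y,z)` on the path between `(u,v)` and
`(w,x)` (i.e. any edge separating `u` from `x`, with `u` on the `y`-side) also
resolves `q`. -/
theorem stmt16 (T : MulTree V L) (a b c d : L) (hab : a ≠ b) (hcd : c ≠ d)
    (u v w x : V)
    (h1 : Resolves T.G T.ψ u v (s(s(a, b), s(c, d))))
    (h2 : Resolves T.G T.ψ w x (s(s(a, b), s(c, d))))
    (ha1 : a ∈ Mside T.G T.ψ u v) (hb1 : b ∈ Mside T.G T.ψ u v)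
    (ha2 : a ∈ Mside T.G T.ψ w x) (hb2 : b ∈ Mside T.G T.ψ w x)
    (y z : V) (hyz : T.G.Adj y z)
    (hu : u ∈ side T.G y z) (hx : x ∈ side T.G z y) :
    Resolves T.G T.ψ y z (s(s(a, b), s(c, d))) := by
  classical
  have hac := T.acyclic
  have huv : T.G.Adj u v := h1.1
  have hwx : T.G.Adj w x := h2.1
  obtain ⟨hc1, hd1⟩ := extract_cd h1 ha1
  obtain ⟨hc2, hd2⟩ := extract_cd h2 ha2
  -- every leaf lies on one of the two sides of any edge
  have hcov : ∀ q, IsLeaf T.G q → ∀ α β : V, T.G.Adj α β →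
      q ∈ side T.G α β ∨ q ∈ side T.G β α := by
    intro q hq α β hαβ
    exact reach_cover (T.conn q (leaf_mem_support hq) α ⟨β, hαβ⟩)
  -- from a membership in `Mside α β`, get a witness leaf and the fact that all
  -- leaves with this label lie on the `α`-side
  have main : ∀ (m : L) (α β : V), T.G.Adj α β → m ∈ Mside T.G T.ψ α β →
      (∃ q, IsLeaf T.G q ∧ T.ψ q = m ∧ q ∈ side T.G α β) ∧
      (∀ q, IsLeaf T.G q → T.ψ q = m → q ∈ side T.G α β) := by
    intro m α β hαβ hm
    obtain ⟨⟨q0, hq0l, hq0s, hq0ψ⟩, hn⟩ := hm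
    refine ⟨⟨q0, hq0l, hq0ψ, hq0s⟩, ?_⟩
    intro q hql hqψ
    rcases hcov q hql α β hαβ with h | h
    · exact h
    · exact absurd ⟨q, hql, h, hqψ⟩ hn
  obtain ⟨⟨pa, hpal, hpaψ, -⟩, hallA⟩ := main a u v huv ha1
  obtain ⟨⟨pb, hpbl, hpbψ, -⟩, hallB⟩ := main b u v huv hb1
  obtain ⟨⟨pc, hpcl, hpcψ, -⟩, hallC⟩ := main c v u huv.symm hc1
  obtain ⟨⟨pd, hpdl, hpdψ, -⟩, hallD⟩ := main d v u huv.symm hd1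
  have hallA' := (main a w x hwx ha2).2
  have hallB' := (main b w x hwx hb2).2
  have hallC' := (main c x w hwx.symm hc2).2
  have hallD' := (main d x w hwx.symm hd2).2
  rcases hcov pa hpal y z hyz with hA | hA
  · -- case B : `pa` on the `y`-side; original orientation
    rcases hcov pc hpcl y z hyz with hC | hC
    · exfalso
      have hsub : side T.G w x ⊆ side T.G z y :=
        key_side hac hwx.symm hyz.symm hx (hallC' pc hpcl hpcψ) hC
      exact side_disjoint hac hyz hA (hsub (hallA' pa hpal hpaψ))
    · have hAB : ∀ q, IsLeaf T.G q → (T.ψ q = a ∨ T.ψ q = b) → q ∈ side T.G y z := by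
        intro q hq hψ
        rcases hcov q hq y z hyz with h | h
        · exact h
        · exfalso
          have hquv : q ∈ side T.G u v := by
            rcases hψ with hψ | hψ
            · exact hallA q hq hψ
            · exact hallB q hq hψ
          have hsub : side T.G v u ⊆ side T.G y z := key_side hac huv hyz hu hquv h
          exact side_disjoint hac hyz (hsub (hallC pc hpcl hpcψ)) hC
      have hCD : ∀ q, IsLeaf T.G q → (T.ψ q = c ∨ T.ψ q = d) → q ∈ side T.G z y := by
        intro q hq hψ
        rcases hcov q hq y z hyz with h | h
        · exfalso
          have hqxw : q ∈ side T.G x w := by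
            rcases hψ with hψ | hψ
            · exact hallC' q hq hψ
            · exact hallD' q hq hψ
          have hsub : side T.G w x ⊆ side T.G z y :=
            key_side hac hwx.symm hyz.symm hx hqxw h
          exact side_disjoint hac hyz hA (hsub (hallA' pa hpal hpaψ))
        · exact h
      exact ⟨hyz, a, b, c, d, hab, hcd,
        mkMside hac hyz hpal hpaψ (fun q hq hψ => hAB q hq (Or.inl hψ)),
        mkMside hac hyz hpbl hpbψ (fun q hq hψ => hAB q hq (Or.inr hψ)),
        mkMside hac hyz.symm hpcl hpcψ (fun q hq hψ => hCD q hq (Or.inl hψ)),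
        mkMside hac hyz.symm hpdl hpdψ (fun q hq hψ => hCD q hq (Or.inr hψ)),
        rfl⟩
  · -- case A : `pa` on the `z`-side; swapped orientation
    have hvu : side T.G v u ⊆ side T.G y z :=
      key_side hac huv hyz hu (hallA pa hpal hpaψ) hA
    have hwx2 : side T.G w x ⊆ side T.G z y :=
      key_side hac hwx.symm hyz.symm hx (hallC' pc hpcl hpcψ) (hvu (hallC pc hpcl hpcψ))
    exact ⟨hyz, c, d, a, b, hcd, hab,
      mkMside hac hyz hpcl hpcψ (fun q hq hψ => hvu (hallC q hq hψ)),
      mkMside hac hyz hpdl hpdψ (fun q hq hψ => hvu (hallD q hq hψ)),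
      mkMside hac hyz.symm hpal hpaψ (fun q hq hψ => hwx2 (hallA' q hq hψ)),
      mkMside hac hyz.symm hpbl hpbψ (fun q hq hψ => hwx2 (hallB' q hq hψ)),
      Sym2.eq_swap⟩
end

section
/- Let ℓ be a label of a MUL-tree (T, M, ψ) such that no quartet in the information content I(T) involves ℓ. Then the tree obtained from T by deleting all leaves labeled ℓ (suppressing any resulting degree-2 nodes) has the same information content as T. -/
open SimpleGraph

variable {V V' L L' : Type}

section Stmt17Aux

variable {ψ : V → L} {ℓ : L}

private lemma reach_map {G₁ G₂ : SimpleGraph V} (f : V → V)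
    (h : ∀ a b, G₁.Adj a b → G₂.Reachable (f a) (f b)) :
    ∀ {x y}, G₁.Reachable x y → G₂.Reachable (f x) (f y) := by
  intro x y hr
  obtain ⟨w⟩ := hr
  induction w with
  | nil => exact Reachable.refl _
  | cons ha _ ih => exact (h _ _ ha).trans ih

private lemma reach_closed {G : SimpleGraph V} {S : Set V}
    (hS : ∀ a ∈ S, ∀ b, G.Adj a b → b ∈ S) :
    ∀ {x y}, G.Reachable x y → x ∈ S → y ∈ S := by
  intro x y hr
  obtain ⟨w⟩ := hr
  induction w with
  | nil => exact id
  | cons ha _ ih => exact fun hx => ih (hS _ hx _ ha)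

private lemma ne_swap {a b c d : V} (h : s(a, b) ≠ s(c, d)) : s(b, a) ≠ s(c, d) :=
  fun he => h (Sym2.eq_swap.trans he)

private lemma adj_of_sym2_eq {G : SimpleGraph V} {a b c d : V} (h : G.Adj a b)
    (he : s(a, b) = s(c, d)) : G.Adj c d := by
  rcases Sym2.eq_iff.mp he with ⟨rfl, rfl⟩ | ⟨rfl, rfl⟩
  · exact h
  · exact h.symm

private lemma adj_pend_eq {G : SimpleGraph V} {v₀ u b : V} (hv : G.neighborSet v₀ = {u})
    (h : G.Adj v₀ b) : b = u := by
  have hb : b ∈ G.neighborSet v₀ := h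
  rw [hv] at hb
  exact hb

private lemma adj_pend {G : SimpleGraph V} {v₀ u : V} (hv : G.neighborSet v₀ = {u}) :
    G.Adj u v₀ := by
  have : u ∈ G.neighborSet v₀ := by rw [hv]; rfl
  exact this.symm

private lemma side_pend {G : SimpleGraph V} {v₀ u : V} (hv : G.neighborSet v₀ = {u}) :
    ∀ w ∈ side G v₀ u, w = v₀ := by
  intro w hw
  have hcl : ∀ a ∈ ({v₀} : Set V), ∀ b, (G.deleteEdges {s(v₀, u)}).Adj a b →
      b ∈ ({v₀} : Set V) := by
    rintro a ha b hb
    simp only [Set.mem_singleton_iff] at ha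
    subst ha
    rw [deleteEdges_adj] at hb
    exact absurd (by rw [adj_pend_eq hv hb.1]; rfl) hb.2
  exact reach_closed hcl (Reachable.symm hw) rfl

private lemma sideLabels_pend {G : SimpleGraph V} {v₀ u : V} (hv : G.neighborSet v₀ = {u})
    {m : L} (hm : m ∈ sideLabels G ψ v₀ u) : m = ψ v₀ := by
  obtain ⟨w, _, hw, rfl⟩ := hm
  rw [side_pend hv w hw]

private lemma not_resolves_pend {G : SimpleGraph V} {v₀ u x y : V}
    (hv : G.neighborSet v₀ = {u}) (hxy : s(x, y) = s(u, v₀)) (Q : Quartet L) :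
    ¬ Resolves G ψ x y Q := by
  rintro ⟨hadj, a, b, c, d, hab, hcd, ha, hb, hc, hd, rfl⟩
  rcases Sym2.eq_iff.mp hxy with ⟨rfl, rfl⟩ | ⟨rfl, rfl⟩
  · exact hcd ((sideLabels_pend hv hc.1).trans (sideLabels_pend hv hd.1).symm)
  · exact hab ((sideLabels_pend hv ha.1).trans (sideLabels_pend hv hb.1).symm)

private lemma good_labels {a b c d : L} (hgood : ∀ pr ∈ (s(s(a, b), s(c, d)) : Quartet L), ℓ ∉ pr) :
    a ≠ ℓ ∧ b ≠ ℓ ∧ c ≠ ℓ ∧ d ≠ ℓ := by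
  have h1 := hgood s(a, b) (Sym2.mem_iff.mpr (Or.inl rfl))
  have h2 := hgood s(c, d) (Sym2.mem_iff.mpr (Or.inr rfl))
  rw [Sym2.mem_iff] at h1 h2
  push_neg at h1 h2
  exact ⟨fun h => h1.1 h.symm, fun h => h1.2 h.symm, fun h => h2.1 h.symm, fun h => h2.2 h.symm⟩

private lemma resolves_transfer_s17 {G₁ G₂ : SimpleGraph V} {x y x' y' : V}
    (hadj : G₂.Adj x' y')
    (h1 : ∀ m, m ≠ ℓ → (m ∈ sideLabels G₁ ψ x y ↔ m ∈ sideLabels G₂ ψ x' y'))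
    (h2 : ∀ m, m ≠ ℓ → (m ∈ sideLabels G₁ ψ y x ↔ m ∈ sideLabels G₂ ψ y' x'))
    {Q : Quartet L} (hgood : ∀ pr ∈ Q, ℓ ∉ pr) (hq : Resolves G₁ ψ x y Q) :
    Resolves G₂ ψ x' y' Q := by
  obtain ⟨_, a, b, c, d, hab, hcd, ha, hb, hc, hd, rfl⟩ := hq
  obtain ⟨hga, hgb, hgc, hgd⟩ := good_labels hgood
  refine ⟨hadj, a, b, c, d, hab, hcd, ?_, ?_, ?_, ?_, rfl⟩
  · exact ⟨(h1 a hga).mp ha.1, fun h => ha.2 ((h2 a hga).mpr h)⟩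
  · exact ⟨(h1 b hgb).mp hb.1, fun h => hb.2 ((h2 b hgb).mpr h)⟩
  · exact ⟨(h2 c hgc).mp hc.1, fun h => hc.2 ((h1 c hgc).mpr h)⟩
  · exact ⟨(h2 d hgd).mp hd.1, fun h => hd.2 ((h1 d hgd).mpr h)⟩

section CaseA

variable {G : SimpleGraph V} {v₀ u : V}

private lemma sideA (hv : G.neighborSet v₀ = {u}) {x y : V}
    (hadj : G.Adj x y) (hne : s(x, y) ≠ s(u, v₀)) :
    ∀ w, w ≠ v₀ → (w ∈ side (G.deleteEdges {s(u, v₀)}) x y ↔ w ∈ side G x y) := by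
  classical
  have hx : x ≠ v₀ := by
    rintro rfl
    have := adj_pend_eq hv hadj
    subst this
    exact hne Sym2.eq_swap
  intro w hw
  constructor
  · intro hr
    refine reach_map id (fun a b hab => ?_) hr
    simp only [deleteEdges_adj, Set.mem_singleton_iff] at hab
    exact SimpleGraph.Adj.reachable
      (deleteEdges_adj.mpr ⟨hab.1.1, by simpa using hab.2⟩)
  · intro hr
    have key := reach_map (G₂ := (G.deleteEdges {s(u, v₀)}).deleteEdges {s(x, y)})
      (fun z => if z = v₀ then u else z) (fun a b hab => ?_) hr
    · simpa only [side, Set.mem_setOf_eq, if_neg hw, if_neg hx] using key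
    · simp only [deleteEdges_adj, Set.mem_singleton_iff] at hab
      obtain ⟨hg, hxy'⟩ := hab
      by_cases hav : a = v₀
      · subst hav
        have hb := adj_pend_eq hv hg
        subst hb
        simp only [if_pos rfl, ite_self]
        exact Reachable.refl _
      · by_cases hbv : b = v₀
        · subst hbv
          have ha := adj_pend_eq hv hg.symm
          subst ha
          simp only [if_pos rfl, ite_self]
          exact Reachable.refl _
        · simp only [if_neg hav, if_neg hbv]
          refine SimpleGraph.Adj.reachable (deleteEdges_adj.mpr
            ⟨deleteEdges_adj.mpr ⟨hg, ?_⟩, by simpa using hxy'⟩)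
          simp only [Set.mem_singleton_iff]
          intro h
          rcases Sym2.eq_iff.mp h with ⟨_, h2⟩ | ⟨h1, _⟩
          · exact hbv h2
          · exact hav h1

private lemma nbrA_other {w : V} (hwu : w ≠ u) (hwv : w ≠ v₀) :
    (G.deleteEdges {s(u, v₀)}).neighborSet w = G.neighborSet w := by
  ext b
  simp only [mem_neighborSet, deleteEdges_adj, Set.mem_singleton_iff, and_iff_left_iff_imp]
  intro _ h
  rcases Sym2.eq_iff.mp h with ⟨h1, _⟩ | ⟨h1, _⟩
  · exact hwu h1
  · exact hwv h1

private lemma nbrA_v₀ (hv : G.neighborSet v₀ = {u}) :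
    (G.deleteEdges {s(u, v₀)}).neighborSet v₀ = ∅ := by
  ext b
  simp only [mem_neighborSet, deleteEdges_adj, Set.mem_singleton_iff, Set.mem_empty_iff_false,
    iff_false, not_and, not_not]
  intro h
  rw [adj_pend_eq hv h]
  exact Sym2.eq_swap

private lemma nbrA_u :
    (G.deleteEdges {s(u, v₀)}).neighborSet u = G.neighborSet u \ {v₀} := by
  ext b
  simp only [mem_neighborSet, deleteEdges_adj, Set.mem_singleton_iff, Set.mem_diff]
  constructor
  · rintro ⟨h1, h2⟩
    exact ⟨h1, fun hb => h2 (by rw [hb])⟩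
  · rintro ⟨h1, h2⟩
    refine ⟨h1, fun he => ?_⟩
    rcases Sym2.eq_iff.mp he with ⟨_, hb⟩ | ⟨huv, hbu⟩
    · exact h2 hb
    · exact h2 (hbu.trans huv)

private lemma leafA_other {w : V} (hwu : w ≠ u) (hwv : w ≠ v₀) :
    IsLeaf (G.deleteEdges {s(u, v₀)}) w ↔ IsLeaf G w := by
  unfold IsLeaf deg
  rw [nbrA_other hwu hwv]

private lemma notleafA_v₀ (hv : G.neighborSet v₀ = {u}) :
    ¬ IsLeaf (G.deleteEdges {s(u, v₀)}) v₀ := by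
  unfold IsLeaf deg
  rw [nbrA_v₀ hv]
  simp

private lemma sideLabelsA (hfin : Finite V)
    (hv : G.neighborSet v₀ = {u}) (hψv : ψ v₀ = ℓ)
    (hul : ¬ IsLeaf (G.deleteEdges {s(u, v₀)}) u)
    {x y : V} (hadj : G.Adj x y) (hne : s(x, y) ≠ s(u, v₀)) :
    ∀ m, m ≠ ℓ →
      (m ∈ sideLabels (G.deleteEdges {s(u, v₀)}) ψ x y ↔ m ∈ sideLabels G ψ x y) := by
  have hx : x ≠ v₀ := by
    rintro rfl
    have := adj_pend_eq hv hadj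
    subst this
    exact hne Sym2.eq_swap
  intro m hm
  constructor
  · rintro ⟨w, hleaf, hside, rfl⟩
    have hwv : w ≠ v₀ := by rintro rfl; exact notleafA_v₀ hv hleaf
    have hwu : w ≠ u := by rintro rfl; exact hul hleaf
    exact ⟨w, (leafA_other hwu hwv).mp hleaf, (sideA hv hadj hne w hwv).mp hside, rfl⟩
  · rintro ⟨w, hleaf, hside, rfl⟩
    have hwv : w ≠ v₀ := by rintro rfl; exact hm hψv
    have hwu : w ≠ u := by
      rintro rfl
      -- then u is a leaf of G with unique neighbor v₀, so u is not on any side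
      obtain ⟨a, ha⟩ := Set.ncard_eq_one.mp hleaf
      have hva : v₀ ∈ G.neighborSet w := adj_pend hv
      rw [ha] at hva
      have hNv : G.neighborSet w = {v₀} := by rw [ha, hva]
      have hxu : x ≠ w := by
        rintro rfl
        have := adj_pend_eq hNv hadj
        subst this
        exact hne rfl
      have hcl : ∀ a ∈ ({w, v₀} : Set V), ∀ b, (G.deleteEdges {s(x, y)}).Adj a b →
          b ∈ ({w, v₀} : Set V) := by
        rintro z hz b hb
        rw [deleteEdges_adj] at hb
        rcases hz with rfl | rfl
        · exact Or.inr (adj_pend_eq hNv hb.1)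
        · exact Or.inl (adj_pend_eq hv hb.1)
      have := reach_closed hcl hside (Or.inl rfl)
      rcases this with h | h
      · exact hxu h
      · exact hx h
    exact ⟨w, (leafA_other hwu hwv).mpr hleaf, (sideA hv hadj hne w hwv).mpr hside, rfl⟩

private lemma infoA (hfin : Finite V)
    (hv : G.neighborSet v₀ = {u}) (hψv : ψ v₀ = ℓ)
    (hul : ¬ IsLeaf (G.deleteEdges {s(u, v₀)}) u)
    {Q : Quartet L} (hgood : ∀ pr ∈ Q, ℓ ∉ pr) :
    Q ∈ infoContent (G.deleteEdges {s(u, v₀)}) ψ ↔ Q ∈ infoContent G ψ := by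
  constructor
  · rintro ⟨s, t, hres⟩
    have h1 := deleteEdges_adj.mp hres.1
    have hne : s(s, t) ≠ s(u, v₀) := by simpa using h1.2
    exact ⟨s, t, resolves_transfer_s17 h1.1
      (sideLabelsA hfin hv hψv hul h1.1 hne)
      (sideLabelsA hfin hv hψv hul h1.1.symm (ne_swap hne)) hgood hres⟩
  · rintro ⟨s, t, hres⟩
    by_cases he : s(s, t) = s(u, v₀)
    · exact absurd hres (not_resolves_pend hv he Q)
    · refine ⟨s, t, resolves_transfer_s17 (deleteEdges_adj.mpr ⟨hres.1, by simpa using he⟩)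
        (fun m hm => (sideLabelsA hfin hv hψv hul hres.1 he m hm).symm)
        (fun m hm => (sideLabelsA hfin hv hψv hul hres.1.symm (ne_swap he) m hm).symm)
        hgood hres⟩

end CaseA

section CaseB

variable {G G' : SimpleGraph V} {v₀ u p q : V}

private lemma hnbB (hNu : G.neighborSet u = {v₀, p, q}) :
    ∀ b, G.Adj u b → b = v₀ ∨ b = p ∨ b = q := by
  intro b hb
  have : b ∈ G.neighborSet u := hb
  rw [hNu] at this
  simpa using this

private lemma endsB (hv : G.neighborSet v₀ = {u}) (hNu : G.neighborSet u = {v₀, p, q})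
    {x y : V} (hadj : G.Adj x y) (h3 : s(x, y) ≠ s(u, v₀)) (h4 : s(x, y) ≠ s(u, p))
    (h5 : s(x, y) ≠ s(u, q)) : x ≠ u ∧ x ≠ v₀ := by
  have hxu : x ≠ u := by
    rintro rfl
    rcases hnbB hNu y hadj with rfl | rfl | rfl
    · exact h3 rfl
    · exact h4 rfl
    · exact h5 rfl
  refine ⟨hxu, ?_⟩
  rintro rfl
  have := adj_pend_eq hv hadj
  subst this
  exact h3 Sym2.eq_swap

private lemma sideB0 (hv : G.neighborSet v₀ = {u}) (hNu : G.neighborSet u = {v₀, p, q})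
    (hpq : p ≠ q) (hpv : p ≠ v₀) (hqv : q ≠ v₀) (hnadj : ¬ G.Adj p q)
    (hG' : ∀ a b, G'.Adj a b ↔ ((G.Adj a b ∧ s(a, b) ≠ s(u, v₀) ∧ s(a, b) ≠ s(u, p) ∧
      s(a, b) ≠ s(u, q)) ∨ s(a, b) = s(p, q)))
    {x y : V} (hadj : G.Adj x y) (h3 : s(x, y) ≠ s(u, v₀)) (h4 : s(x, y) ≠ s(u, p))
    (h5 : s(x, y) ≠ s(u, q)) :
    ∀ w, w ≠ u → w ≠ v₀ → (w ∈ side G' x y ↔ w ∈ side G x y) := by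
  classical
  have hup : G.Adj u p := by rw [← mem_neighborSet, hNu]; simp
  have huq : G.Adj u q := by rw [← mem_neighborSet, hNu]; simp
  have hpu : p ≠ u := hup.ne'
  have hqu : q ≠ u := huq.ne'
  obtain ⟨hxu, hxv⟩ := endsB hv hNu hadj h3 h4 h5
  intro w hwu hwv
  constructor
  · intro hr
    refine reach_map id (fun a b hab => ?_) hr
    simp only [deleteEdges_adj, Set.mem_singleton_iff] at hab
    obtain ⟨hab1, hab2⟩ := hab
    rcases (hG' a b).mp hab1 with ⟨hg, _, _, _⟩ | hnew
    · exact SimpleGraph.Adj.reachable (deleteEdges_adj.mpr ⟨hg, by simpa using hab2⟩)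
    · have hr1 : (G.deleteEdges {s(x, y)}).Reachable p q := by
        refine (SimpleGraph.Adj.reachable (deleteEdges_adj.mpr ⟨hup.symm, ?_⟩)).trans
          (SimpleGraph.Adj.reachable (deleteEdges_adj.mpr ⟨huq, ?_⟩))
        · simp only [Set.mem_singleton_iff]
          intro he
          exact h4 (he.symm.trans Sym2.eq_swap)
        · simp only [Set.mem_singleton_iff]
          intro he
          exact h5 he.symm
      rcases Sym2.eq_iff.mp hnew with ⟨rfl, rfl⟩ | ⟨rfl, rfl⟩
      · exact hr1
      · exact hr1.symm
  · intro hr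
    have hrefl : (G'.deleteEdges {s(x, y)}).Reachable p p := Reachable.refl p
    have hnewadj : (G'.deleteEdges {s(x, y)}).Adj p q := by
      refine deleteEdges_adj.mpr ⟨(hG' p q).mpr (Or.inr rfl), ?_⟩
      simp only [Set.mem_singleton_iff]
      intro he
      exact hnadj (adj_of_sym2_eq hadj he.symm)
    have key := reach_map (G₂ := G'.deleteEdges {s(x, y)})
      (fun z => if z = u ∨ z = v₀ then p else z) (fun a b hab => ?_) hr
    · simpa [side, hwu, hwv, hxu, hxv] using key
    · simp only [deleteEdges_adj, Set.mem_singleton_iff] at hab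
      obtain ⟨hg, hxy'⟩ := hab
      by_cases hau : a = u
      · subst hau
        rcases hnbB hNu b hg with rfl | rfl | rfl
        · simpa using hrefl
        · simpa [hpu, hpv] using hrefl
        · simpa [hqu, hqv] using hnewadj.reachable
      · by_cases hbu : b = u
        · subst hbu
          rcases hnbB hNu a hg.symm with rfl | rfl | rfl
          · simpa using hrefl
          · simpa [hpu, hpv] using hrefl
          · simpa [hqu, hqv] using hnewadj.symm.reachable
        · have hav : a ≠ v₀ := by rintro rfl; exact hbu (adj_pend_eq hv hg)
          have hbv : b ≠ v₀ := by rintro rfl; exact hau (adj_pend_eq hv hg.symm)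
          have hedge : (G'.deleteEdges {s(x, y)}).Adj a b := by
            refine deleteEdges_adj.mpr
              ⟨(hG' a b).mpr (Or.inl ⟨hg, ?_, ?_, ?_⟩), by simpa using hxy'⟩
            all_goals
              intro h
              rcases Sym2.eq_iff.mp h with ⟨h1, _⟩ | ⟨_, h2⟩
              · exact hau h1
              · exact hbu h2
          simpa [hau, hbu, hav, hbv] using hedge.reachable

private lemma sideB1 (hv : G.neighborSet v₀ = {u}) (hNu : G.neighborSet u = {v₀, p, q})
    (hpq : p ≠ q) (hpv : p ≠ v₀) (hqv : q ≠ v₀) (hnadj : ¬ G.Adj p q)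
    (hG' : ∀ a b, G'.Adj a b ↔ ((G.Adj a b ∧ s(a, b) ≠ s(u, v₀) ∧ s(a, b) ≠ s(u, p) ∧
      s(a, b) ≠ s(u, q)) ∨ s(a, b) = s(p, q))) :
    ∀ w, w ≠ u → w ≠ v₀ → (w ∈ side G' p q ↔ w ∈ side G u q) := by
  classical
  have hup : G.Adj u p := by rw [← mem_neighborSet, hNu]; simp
  have huq : G.Adj u q := by rw [← mem_neighborSet, hNu]; simp
  have hpu : p ≠ u := hup.ne'
  have hqu : q ≠ u := huq.ne'
  intro w hwu hwv
  constructor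
  · intro hr
    have step1 : (G.deleteEdges {s(u, q)}).Reachable w p := by
      refine reach_map id (fun a b hab => ?_) hr
      simp only [deleteEdges_adj, Set.mem_singleton_iff] at hab
      obtain ⟨hab1, hab2⟩ := hab
      rcases (hG' a b).mp hab1 with ⟨hg, _, _, h6⟩ | hnew
      · exact SimpleGraph.Adj.reachable (deleteEdges_adj.mpr ⟨hg, by simpa using h6⟩)
      · exact absurd hnew hab2
    refine step1.trans (SimpleGraph.Adj.reachable (deleteEdges_adj.mpr ⟨hup.symm, ?_⟩))
    simp only [Set.mem_singleton_iff]
    intro h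
    rcases Sym2.eq_iff.mp h with ⟨h1, _⟩ | ⟨h1, _⟩
    · exact hpu h1
    · exact hpq h1
  · intro hr
    have hrefl : (G'.deleteEdges {s(p, q)}).Reachable p p := Reachable.refl p
    have key := reach_map (G₂ := G'.deleteEdges {s(p, q)})
      (fun z => if z = u ∨ z = v₀ then p else z) (fun a b hab => ?_) hr
    · simpa [side, hwu, hwv] using key
    · simp only [deleteEdges_adj, Set.mem_singleton_iff] at hab
      obtain ⟨hg, huq'⟩ := hab
      by_cases hau : a = u
      · subst hau
        rcases hnbB hNu b hg with rfl | rfl | rfl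
        · simpa using hrefl
        · simpa [hpu, hpv] using hrefl
        · exact absurd rfl huq'
      · by_cases hbu : b = u
        · subst hbu
          rcases hnbB hNu a hg.symm with rfl | rfl | rfl
          · simpa using hrefl
          · simpa [hpu, hpv] using hrefl
          · exact absurd Sym2.eq_swap huq'
        · have hav : a ≠ v₀ := by rintro rfl; exact hbu (adj_pend_eq hv hg)
          have hbv : b ≠ v₀ := by rintro rfl; exact hau (adj_pend_eq hv hg.symm)
          have hedge : (G'.deleteEdges {s(p, q)}).Adj a b := by
            refine deleteEdges_adj.mpr ⟨(hG' a b).mpr (Or.inl ⟨hg, ?_, ?_, huq'⟩), ?_⟩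
            · intro h
              rcases Sym2.eq_iff.mp h with ⟨h1, _⟩ | ⟨_, h2⟩
              · exact hau h1
              · exact hbu h2
            · intro h
              rcases Sym2.eq_iff.mp h with ⟨h1, _⟩ | ⟨_, h2⟩
              · exact hau h1
              · exact hbu h2
            · simp only [Set.mem_singleton_iff]
              intro he
              exact hnadj (adj_of_sym2_eq hg he)
          simpa [hau, hbu, hav, hbv] using hedge.reachable

private lemma sideB2 (hv : G.neighborSet v₀ = {u}) (hNu : G.neighborSet u = {v₀, p, q})
    (hpq : p ≠ q) (hpv : p ≠ v₀) (hqv : q ≠ v₀) (hnadj : ¬ G.Adj p q)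
    (hG' : ∀ a b, G'.Adj a b ↔ ((G.Adj a b ∧ s(a, b) ≠ s(u, v₀) ∧ s(a, b) ≠ s(u, p) ∧
      s(a, b) ≠ s(u, q)) ∨ s(a, b) = s(p, q))) :
    ∀ w, w ≠ u → w ≠ v₀ → (w ∈ side G' q p ↔ w ∈ side G q u) := by
  classical
  have hup : G.Adj u p := by rw [← mem_neighborSet, hNu]; simp
  have huq : G.Adj u q := by rw [← mem_neighborSet, hNu]; simp
  have hpu : p ≠ u := hup.ne'
  have hqu : q ≠ u := huq.ne'
  have hsw : ({s(q, p)} : Set (Sym2 V)) = {s(p, q)} := by rw [Sym2.eq_swap]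
  have hsw2 : ({s(q, u)} : Set (Sym2 V)) = {s(u, q)} := by rw [Sym2.eq_swap]
  intro w hwu hwv
  show (G'.deleteEdges {s(q, p)}).Reachable w q ↔ (G.deleteEdges {s(q, u)}).Reachable w q
  rw [hsw, hsw2]
  constructor
  · intro hr
    refine reach_map id (fun a b hab => ?_) hr
    simp only [deleteEdges_adj, Set.mem_singleton_iff] at hab
    obtain ⟨hab1, hab2⟩ := hab
    rcases (hG' a b).mp hab1 with ⟨hg, _, _, h6⟩ | hnew
    · exact SimpleGraph.Adj.reachable (deleteEdges_adj.mpr ⟨hg, by simpa using h6⟩)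
    · exact absurd hnew hab2
  · intro hr
    have hrefl : (G'.deleteEdges {s(p, q)}).Reachable p p := Reachable.refl p
    have key := reach_map (G₂ := G'.deleteEdges {s(p, q)})
      (fun z => if z = u ∨ z = v₀ then p else z) (fun a b hab => ?_) hr
    · simpa [hwu, hwv, hqu, hqv] using key
    · simp only [deleteEdges_adj, Set.mem_singleton_iff] at hab
      obtain ⟨hg, huq'⟩ := hab
      by_cases hau : a = u
      · subst hau
        rcases hnbB hNu b hg with rfl | rfl | rfl
        · simpa using hrefl
        · simpa [hpu, hpv] using hrefl
        · exact absurd rfl huq'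
      · by_cases hbu : b = u
        · subst hbu
          rcases hnbB hNu a hg.symm with rfl | rfl | rfl
          · simpa using hrefl
          · simpa [hpu, hpv] using hrefl
          · exact absurd Sym2.eq_swap huq'
        · have hav : a ≠ v₀ := by rintro rfl; exact hbu (adj_pend_eq hv hg)
          have hbv : b ≠ v₀ := by rintro rfl; exact hau (adj_pend_eq hv hg.symm)
          have hedge : (G'.deleteEdges {s(p, q)}).Adj a b := by
            refine deleteEdges_adj.mpr ⟨(hG' a b).mpr (Or.inl ⟨hg, ?_, ?_, ?_⟩), ?_⟩
            · intro h
              rcases Sym2.eq_iff.mp h with ⟨h1, _⟩ | ⟨_, h2⟩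
              · exact hau h1
              · exact hbu h2
            · intro h
              rcases Sym2.eq_iff.mp h with ⟨h1, _⟩ | ⟨_, h2⟩
              · exact hau h1
              · exact hbu h2
            · intro h
              rcases Sym2.eq_iff.mp h with ⟨h1, _⟩ | ⟨_, h2⟩
              · exact hau h1
              · exact hbu h2
            · simp only [Set.mem_singleton_iff]
              intro he
              exact hnadj (adj_of_sym2_eq hg he)
          simpa [hau, hbu, hav, hbv] using hedge.reachable

end CaseB


section CaseB2

variable {G G' : SimpleGraph V} {v₀ u p q : V}

private lemma hG'_swap (hG' : ∀ a b, G'.Adj a b ↔ ((G.Adj a b ∧ s(a, b) ≠ s(u, v₀) ∧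
      s(a, b) ≠ s(u, p) ∧ s(a, b) ≠ s(u, q)) ∨ s(a, b) = s(p, q))) :
    ∀ a b, G'.Adj a b ↔ ((G.Adj a b ∧ s(a, b) ≠ s(u, v₀) ∧ s(a, b) ≠ s(u, q) ∧
      s(a, b) ≠ s(u, p)) ∨ s(a, b) = s(q, p)) := by
  intro a b
  rw [hG' a b]
  constructor
  · rintro (⟨h, h1, h2, h3⟩ | h)
    · exact Or.inl ⟨h, h1, h3, h2⟩
    · exact Or.inr (h.trans Sym2.eq_swap)
  · rintro (⟨h, h1, h2, h3⟩ | h)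
    · exact Or.inl ⟨h, h1, h3, h2⟩
    · exact Or.inr (h.trans Sym2.eq_swap)

private lemma nbrB_u (hNu : G.neighborSet u = {v₀, p, q})
    (hG' : ∀ a b, G'.Adj a b ↔ ((G.Adj a b ∧ s(a, b) ≠ s(u, v₀) ∧ s(a, b) ≠ s(u, p) ∧
      s(a, b) ≠ s(u, q)) ∨ s(a, b) = s(p, q))) :
    G'.neighborSet u = ∅ := by
  have hup : G.Adj u p := by rw [← mem_neighborSet, hNu]; simp
  have huq : G.Adj u q := by rw [← mem_neighborSet, hNu]; simp
  ext b
  simp only [mem_neighborSet, Set.mem_empty_iff_false, iff_false]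
  intro hb
  rcases (hG' u b).mp hb with ⟨hg, h1, h2, h3⟩ | hnew
  · rcases hnbB hNu b hg with rfl | rfl | rfl
    exacts [h1 rfl, h2 rfl, h3 rfl]
  · rcases Sym2.eq_iff.mp hnew with ⟨h1, _⟩ | ⟨h1, _⟩
    exacts [hup.ne h1, huq.ne h1]

private lemma nbrB_v0 (hv : G.neighborSet v₀ = {u}) (hpv : p ≠ v₀) (hqv : q ≠ v₀)
    (hG' : ∀ a b, G'.Adj a b ↔ ((G.Adj a b ∧ s(a, b) ≠ s(u, v₀) ∧ s(a, b) ≠ s(u, p) ∧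
      s(a, b) ≠ s(u, q)) ∨ s(a, b) = s(p, q))) :
    G'.neighborSet v₀ = ∅ := by
  ext b
  simp only [mem_neighborSet, Set.mem_empty_iff_false, iff_false]
  intro hb
  rcases (hG' v₀ b).mp hb with ⟨hg, h1, _, _⟩ | hnew
  · have := adj_pend_eq hv hg
    subst this
    exact h1 Sym2.eq_swap
  · rcases Sym2.eq_iff.mp hnew with ⟨h1, _⟩ | ⟨h1, _⟩
    exacts [hpv h1.symm, hqv h1.symm]

private lemma nbrB_p (hNu : G.neighborSet u = {v₀, p, q}) (hpq : p ≠ q) (hpv : p ≠ v₀)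
    (hG' : ∀ a b, G'.Adj a b ↔ ((G.Adj a b ∧ s(a, b) ≠ s(u, v₀) ∧ s(a, b) ≠ s(u, p) ∧
      s(a, b) ≠ s(u, q)) ∨ s(a, b) = s(p, q))) :
    G'.neighborSet p = insert q (G.neighborSet p \ {u}) := by
  have hup : G.Adj u p := by rw [← mem_neighborSet, hNu]; simp
  have hpu : p ≠ u := hup.ne'
  ext b
  simp only [mem_neighborSet, Set.mem_insert_iff, Set.mem_diff, Set.mem_singleton_iff]
  constructor
  · intro hb
    rcases (hG' p b).mp hb with ⟨hg, h1, h2, h3⟩ | hnew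
    · refine Or.inr ⟨hg, fun hbu => ?_⟩
      subst hbu
      exact h2 Sym2.eq_swap
    · rcases Sym2.eq_iff.mp hnew with ⟨_, h⟩ | ⟨h1, _⟩
      exacts [Or.inl h, absurd h1 hpq]
  · rintro (rfl | ⟨hg, hbu⟩)
    · exact (hG' p b).mpr (Or.inr rfl)
    · refine (hG' p b).mpr (Or.inl ⟨hg, ?_, ?_, ?_⟩)
      · intro h
        rcases Sym2.eq_iff.mp h with ⟨h1, _⟩ | ⟨h1, _⟩
        exacts [hpu h1, hpv h1]
      · intro h
        rcases Sym2.eq_iff.mp h with ⟨h1, _⟩ | ⟨_, h2⟩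
        exacts [hpu h1, hbu h2]
      · intro h
        rcases Sym2.eq_iff.mp h with ⟨h1, _⟩ | ⟨h1, _⟩
        exacts [hpu h1, hpq h1]

private lemma nbrB_other (hNu : G.neighborSet u = {v₀, p, q}) {w : V}
    (hwu : w ≠ u) (hwv : w ≠ v₀) (hwp : w ≠ p) (hwq : w ≠ q)
    (hG' : ∀ a b, G'.Adj a b ↔ ((G.Adj a b ∧ s(a, b) ≠ s(u, v₀) ∧ s(a, b) ≠ s(u, p) ∧
      s(a, b) ≠ s(u, q)) ∨ s(a, b) = s(p, q))) :
    G'.neighborSet w = G.neighborSet w := by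
  ext b
  simp only [mem_neighborSet]
  constructor
  · intro hb
    rcases (hG' w b).mp hb with ⟨hg, _, _, _⟩ | hnew
    · exact hg
    · exfalso
      rcases Sym2.eq_iff.mp hnew with ⟨h1, _⟩ | ⟨h1, _⟩
      exacts [hwp h1, hwq h1]
  · intro hb
    refine (hG' w b).mpr (Or.inl ⟨hb, ?_, ?_, ?_⟩)
    · intro h
      rcases Sym2.eq_iff.mp h with ⟨h1, _⟩ | ⟨h1, _⟩
      exacts [hwu h1, hwv h1]
    · intro h
      rcases Sym2.eq_iff.mp h with ⟨h1, _⟩ | ⟨h1, _⟩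
      exacts [hwu h1, hwp h1]
    · intro h
      rcases Sym2.eq_iff.mp h with ⟨h1, _⟩ | ⟨h1, _⟩
      exacts [hwu h1, hwq h1]

private lemma degB_p (hfin : Finite V) (hNu : G.neighborSet u = {v₀, p, q}) (hpq : p ≠ q)
    (hpv : p ≠ v₀) (hnadj : ¬ G.Adj p q)
    (hG' : ∀ a b, G'.Adj a b ↔ ((G.Adj a b ∧ s(a, b) ≠ s(u, v₀) ∧ s(a, b) ≠ s(u, p) ∧
      s(a, b) ≠ s(u, q)) ∨ s(a, b) = s(p, q))) :
    deg G' p = deg G p := by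
  haveI := hfin
  have hup : G.Adj u p := by rw [← mem_neighborSet, hNu]; simp
  have humem : u ∈ G.neighborSet p := hup.symm
  have hqmem : q ∉ G.neighborSet p \ {u} := fun h => hnadj h.1
  have hpos : 0 < (G.neighborSet p).ncard :=
    (Set.ncard_pos (Set.toFinite _)).mpr ⟨u, humem⟩
  unfold deg
  rw [nbrB_p hNu hpq hpv hG', Set.ncard_insert_of_notMem hqmem (Set.toFinite _),
    Set.ncard_diff_singleton_of_mem humem]
  omega

private lemma leafB (hfin : Finite V) (hv : G.neighborSet v₀ = {u})
    (hNu : G.neighborSet u = {v₀, p, q})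
    (hpq : p ≠ q) (hpv : p ≠ v₀) (hqv : q ≠ v₀) (hnadj : ¬ G.Adj p q)
    (hdegu : deg G u = 3)
    (hG' : ∀ a b, G'.Adj a b ↔ ((G.Adj a b ∧ s(a, b) ≠ s(u, v₀) ∧ s(a, b) ≠ s(u, p) ∧
      s(a, b) ≠ s(u, q)) ∨ s(a, b) = s(p, q))) :
    ∀ w, IsLeaf G' w ↔ (IsLeaf G w ∧ w ≠ v₀) := by
  haveI := hfin
  have hNu2 : G.neighborSet u = {v₀, q, p} := by rw [hNu, Set.pair_comm p q]
  have hG'2 := hG'_swap hG'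
  have hnadj2 : ¬ G.Adj q p := fun h => hnadj h.symm
  intro w
  by_cases hwu : w = u
  · subst hwu
    constructor
    · intro h
      exfalso
      have h1 : deg G' w = 1 := h
      have h0 : deg G' w = 0 := by
        unfold deg
        rw [nbrB_u hNu hG']
        exact Set.ncard_empty _
      omega
    · rintro ⟨h, _⟩
      have h1 : deg G w = 1 := h
      omega
  by_cases hwv : w = v₀
  · subst hwv
    constructor
    · intro h
      exfalso
      have h1 : deg G' w = 1 := h
      have h0 : deg G' w = 0 := by
        unfold deg
        rw [nbrB_v0 hv hpv hqv hG']
        exact Set.ncard_empty _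
      omega
    · rintro ⟨_, hne⟩
      exact absurd rfl hne
  by_cases hwp : w = p
  · subst hwp
    have hd := degB_p hfin hNu hpq hpv hnadj hG'
    constructor
    · intro h
      exact ⟨show deg G w = 1 by rw [← hd]; exact h, hwv⟩
    · rintro ⟨h, _⟩
      show deg G' w = 1
      rw [hd]
      exact h
  by_cases hwq : w = q
  · subst hwq
    have hd := degB_p hfin hNu2 hpq.symm hqv hnadj2 hG'2
    constructor
    · intro h
      exact ⟨show deg G w = 1 by rw [← hd]; exact h, hwv⟩
    · rintro ⟨h, _⟩
      show deg G' w = 1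
      rw [hd]
      exact h
  · constructor
    · intro h
      refine ⟨?_, hwv⟩
      have h1 : deg G' w = 1 := h
      show deg G w = 1
      unfold deg at h1 ⊢
      rwa [nbrB_other hNu hwu hwv hwp hwq hG'] at h1
    · rintro ⟨h, _⟩
      have h1 : deg G w = 1 := h
      show deg G' w = 1
      unfold deg at h1 ⊢
      rwa [nbrB_other hNu hwu hwv hwp hwq hG']

end CaseB2

section CaseB3

variable {G G' : SimpleGraph V} {ψ : V → L} {ℓ : L} {v₀ u p q : V}

private lemma sideLabelsB0 (hfin : Finite V) (hv : G.neighborSet v₀ = {u})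
    (hNu : G.neighborSet u = {v₀, p, q})
    (hpq : p ≠ q) (hpv : p ≠ v₀) (hqv : q ≠ v₀) (hnadj : ¬ G.Adj p q)
    (hψv : ψ v₀ = ℓ) (hdegu : deg G u = 3)
    (hG' : ∀ a b, G'.Adj a b ↔ ((G.Adj a b ∧ s(a, b) ≠ s(u, v₀) ∧ s(a, b) ≠ s(u, p) ∧
      s(a, b) ≠ s(u, q)) ∨ s(a, b) = s(p, q)))
    {x y : V} (hadj : G.Adj x y) (h3 : s(x, y) ≠ s(u, v₀)) (h4 : s(x, y) ≠ s(u, p))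
    (h5 : s(x, y) ≠ s(u, q)) :
    ∀ m, m ≠ ℓ → (m ∈ sideLabels G' ψ x y ↔ m ∈ sideLabels G ψ x y) := by
  have hlu : ¬ IsLeaf G u := fun h => by
    have h1 : deg G u = 1 := h
    omega
  intro m hm
  constructor
  · rintro ⟨w, hleaf, hside, rfl⟩
    obtain ⟨hleafG, hwv⟩ :=
      (leafB hfin hv hNu hpq hpv hqv hnadj hdegu hG' w).mp hleaf
    have hwu : w ≠ u := fun e => hlu (e ▸ hleafG)
    exact ⟨w, hleafG,
      (sideB0 hv hNu hpq hpv hqv hnadj hG' hadj h3 h4 h5 w hwu hwv).mp hside, rfl⟩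
  · rintro ⟨w, hleaf, hside, rfl⟩
    have hwv : w ≠ v₀ := by rintro rfl; exact hm hψv
    have hwu : w ≠ u := fun e => hlu (e ▸ hleaf)
    exact ⟨w, (leafB hfin hv hNu hpq hpv hqv hnadj hdegu hG' w).mpr ⟨hleaf, hwv⟩,
      (sideB0 hv hNu hpq hpv hqv hnadj hG' hadj h3 h4 h5 w hwu hwv).mpr hside, rfl⟩

private lemma sideLabelsB1 (hfin : Finite V) (hv : G.neighborSet v₀ = {u})
    (hNu : G.neighborSet u = {v₀, p, q})
    (hpq : p ≠ q) (hpv : p ≠ v₀) (hqv : q ≠ v₀) (hnadj : ¬ G.Adj p q)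
    (hψv : ψ v₀ = ℓ) (hdegu : deg G u = 3)
    (hG' : ∀ a b, G'.Adj a b ↔ ((G.Adj a b ∧ s(a, b) ≠ s(u, v₀) ∧ s(a, b) ≠ s(u, p) ∧
      s(a, b) ≠ s(u, q)) ∨ s(a, b) = s(p, q))) :
    ∀ m, m ≠ ℓ → (m ∈ sideLabels G' ψ p q ↔ m ∈ sideLabels G ψ u q) := by
  have hlu : ¬ IsLeaf G u := fun h => by
    have h1 : deg G u = 1 := h
    omega
  intro m hm
  constructor
  · rintro ⟨w, hleaf, hside, rfl⟩
    obtain ⟨hleafG, hwv⟩ :=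
      (leafB hfin hv hNu hpq hpv hqv hnadj hdegu hG' w).mp hleaf
    have hwu : w ≠ u := fun e => hlu (e ▸ hleafG)
    exact ⟨w, hleafG,
      (sideB1 hv hNu hpq hpv hqv hnadj hG' w hwu hwv).mp hside, rfl⟩
  · rintro ⟨w, hleaf, hside, rfl⟩
    have hwv : w ≠ v₀ := by rintro rfl; exact hm hψv
    have hwu : w ≠ u := fun e => hlu (e ▸ hleaf)
    exact ⟨w, (leafB hfin hv hNu hpq hpv hqv hnadj hdegu hG' w).mpr ⟨hleaf, hwv⟩,
      (sideB1 hv hNu hpq hpv hqv hnadj hG' w hwu hwv).mpr hside, rfl⟩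

private lemma sideLabelsB2 (hfin : Finite V) (hv : G.neighborSet v₀ = {u})
    (hNu : G.neighborSet u = {v₀, p, q})
    (hpq : p ≠ q) (hpv : p ≠ v₀) (hqv : q ≠ v₀) (hnadj : ¬ G.Adj p q)
    (hψv : ψ v₀ = ℓ) (hdegu : deg G u = 3)
    (hG' : ∀ a b, G'.Adj a b ↔ ((G.Adj a b ∧ s(a, b) ≠ s(u, v₀) ∧ s(a, b) ≠ s(u, p) ∧
      s(a, b) ≠ s(u, q)) ∨ s(a, b) = s(p, q))) :
    ∀ m, m ≠ ℓ → (m ∈ sideLabels G' ψ q p ↔ m ∈ sideLabels G ψ q u) := by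
  have hlu : ¬ IsLeaf G u := fun h => by
    have h1 : deg G u = 1 := h
    omega
  intro m hm
  constructor
  · rintro ⟨w, hleaf, hside, rfl⟩
    obtain ⟨hleafG, hwv⟩ :=
      (leafB hfin hv hNu hpq hpv hqv hnadj hdegu hG' w).mp hleaf
    have hwu : w ≠ u := fun e => hlu (e ▸ hleafG)
    exact ⟨w, hleafG,
      (sideB2 hv hNu hpq hpv hqv hnadj hG' w hwu hwv).mp hside, rfl⟩
  · rintro ⟨w, hleaf, hside, rfl⟩
    have hwv : w ≠ v₀ := by rintro rfl; exact hm hψv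
    have hwu : w ≠ u := fun e => hlu (e ▸ hleaf)
    exact ⟨w, (leafB hfin hv hNu hpq hpv hqv hnadj hdegu hG' w).mpr ⟨hleaf, hwv⟩,
      (sideB2 hv hNu hpq hpv hqv hnadj hG' w hwu hwv).mpr hside, rfl⟩

private lemma infoB (hfin : Finite V) (hv : G.neighborSet v₀ = {u})
    (hNu : G.neighborSet u = {v₀, p, q})
    (hpq : p ≠ q) (hpv : p ≠ v₀) (hqv : q ≠ v₀) (hnadj : ¬ G.Adj p q)
    (hψv : ψ v₀ = ℓ) (hdegu : deg G u = 3)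
    (hG' : ∀ a b, G'.Adj a b ↔ ((G.Adj a b ∧ s(a, b) ≠ s(u, v₀) ∧ s(a, b) ≠ s(u, p) ∧
      s(a, b) ≠ s(u, q)) ∨ s(a, b) = s(p, q)))
    {Q : Quartet L} (hgood : ∀ pr ∈ Q, ℓ ∉ pr) :
    Q ∈ infoContent G' ψ ↔ Q ∈ infoContent G ψ := by
  have hup : G.Adj u p := by rw [← mem_neighborSet, hNu]; simp
  have huq : G.Adj u q := by rw [← mem_neighborSet, hNu]; simp
  have hNu2 : G.neighborSet u = {v₀, q, p} := by rw [hNu, Set.pair_comm p q]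
  have hG'2 := hG'_swap hG'
  have hnadj2 : ¬ G.Adj q p := fun h => hnadj h.symm
  have B0 := fun {x y : V} (hadj : G.Adj x y) h3 h4 h5 =>
    sideLabelsB0 hfin hv hNu hpq hpv hqv hnadj hψv hdegu hG' hadj h3 h4 h5
  have B1 := sideLabelsB1 hfin hv hNu hpq hpv hqv hnadj hψv hdegu hG'
  have B2 := sideLabelsB2 hfin hv hNu hpq hpv hqv hnadj hψv hdegu hG'
  have B1' := sideLabelsB1 hfin hv hNu2 hpq.symm hqv hpv hnadj2 hψv hdegu hG'2
  have B2' := sideLabelsB2 hfin hv hNu2 hpq.symm hqv hpv hnadj2 hψv hdegu hG'2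
  have hadjpq : G'.Adj p q := (hG' p q).mpr (Or.inr rfl)
  have hadjqp : G'.Adj q p := hadjpq.symm
  constructor
  · rintro ⟨s, t, hres⟩
    rcases (hG' s t).mp hres.1 with ⟨hg, h3, h4, h5⟩ | hnew
    · exact ⟨s, t, resolves_transfer_s17 hg (B0 hg h3 h4 h5)
        (B0 hg.symm (ne_swap h3) (ne_swap h4) (ne_swap h5)) hgood hres⟩
    · rcases Sym2.eq_iff.mp hnew with ⟨h6, h7⟩ | ⟨h6, h7⟩ <;> rw [h6, h7] at hres
      · exact ⟨u, q, resolves_transfer_s17 huq B1 B2 hgood hres⟩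
      · exact ⟨u, p, resolves_transfer_s17 hup B1' B2' hgood hres⟩
  · rintro ⟨s, t, hres⟩
    by_cases h3 : s(s, t) = s(u, v₀)
    · exact absurd hres (not_resolves_pend hv h3 Q)
    by_cases h4 : s(s, t) = s(u, p)
    · rcases Sym2.eq_iff.mp h4 with ⟨h6, h7⟩ | ⟨h6, h7⟩ <;> rw [h6, h7] at hres
      · exact ⟨q, p, resolves_transfer_s17 hadjqp (fun m hm => (B1' m hm).symm)
          (fun m hm => (B2' m hm).symm) hgood hres⟩
      · exact ⟨p, q, resolves_transfer_s17 hadjpq (fun m hm => (B2' m hm).symm)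
          (fun m hm => (B1' m hm).symm) hgood hres⟩
    by_cases h5 : s(s, t) = s(u, q)
    · rcases Sym2.eq_iff.mp h5 with ⟨h6, h7⟩ | ⟨h6, h7⟩ <;> rw [h6, h7] at hres
      · exact ⟨p, q, resolves_transfer_s17 hadjpq (fun m hm => (B1 m hm).symm)
          (fun m hm => (B2 m hm).symm) hgood hres⟩
      · exact ⟨q, p, resolves_transfer_s17 hadjqp (fun m hm => (B2 m hm).symm)
          (fun m hm => (B1 m hm).symm) hgood hres⟩
    · exact ⟨s, t, resolves_transfer_s17 ((hG' s t).mpr (Or.inl ⟨hres.1, h3, h4, h5⟩))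
        (fun m hm => (B0 hres.1 h3 h4 h5 m hm).symm)
        (fun m hm => (B0 hres.1.symm (ne_swap h3) (ne_swap h4) (ne_swap h5) m hm).symm)
        hgood hres⟩

end CaseB3

section StepMain

variable {ψ : V → L} {ℓ : L}

private lemma stepMain (hfin : Finite V) {G G' : SimpleGraph V}
    (hacy : G.IsAcyclic)
    (hint : ∀ v ∈ G.support, ¬ IsLeaf G v → 3 ≤ deg G v)
    (hstep : PruneLabelStep ψ ℓ G G') :
    G'.IsAcyclic ∧ (∀ v ∈ G'.support, ¬ IsLeaf G' v → 3 ≤ deg G' v) ∧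
      ∀ Q : Quartet L, (∀ pr ∈ Q, ℓ ∉ pr) →
        (Q ∈ infoContent G' ψ ↔ Q ∈ infoContent G ψ) := by
  haveI := hfin
  obtain ⟨v₀, hlv₀, hψv, u, hv, hcase⟩ := hstep
  have huv : G.Adj u v₀ := adj_pend hv
  have bridge : ∀ a b, G.Adj a b → ¬ (G.deleteEdges {s(a, b)}).Reachable a b := by
    intro a b hab
    have h := (isAcyclic_iff_forall_edge_isBridge.mp hacy) (G.mem_edgeSet.mpr hab)
    exact isBridge_iff.mp h
  rcases hcase with ⟨hdeg, rfl⟩ | ⟨hdeg3, p, q, hpq, hpv, hqv, hNu, rfl⟩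
  · -- Case A : just delete the pendant edge
    have hvmem : v₀ ∈ G.neighborSet u := huv
    have hdeg' : deg (G.deleteEdges {s(u, v₀)}) u = deg G u - 1 := by
      unfold deg
      rw [nbrA_u, Set.ncard_diff_singleton_of_mem hvmem]
    have hul : ¬ IsLeaf (G.deleteEdges {s(u, v₀)}) u := by
      intro h
      have h1 : deg (G.deleteEdges {s(u, v₀)}) u = 1 := h
      by_cases hlu : IsLeaf G u
      · have h2 : deg G u = 1 := hlu
        omega
      · have h3 := hint u ⟨v₀, huv⟩ hlu
        omega
    refine ⟨?_, ?_, fun Q hgood => infoA hfin hv hψv hul hgood⟩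
    · rw [isAcyclic_iff_forall_edge_isBridge]
      intro e he
      induction e using Sym2.ind with
      | _ a b =>
        rw [mem_edgeSet] at he
        have h1 := deleteEdges_adj.mp he
        have hne : s(a, b) ≠ s(u, v₀) := by simpa using h1.2
        rw [isBridge_iff]
        refine fun hr => ?_
        have hbv : b ≠ v₀ := by
          rintro rfl
          have := adj_pend_eq hv h1.1.symm
          subst this
          exact hne rfl
        have hb := (sideA hv h1.1 hne b hbv).mp hr.symm
        exact bridge a b h1.1 hb.symm
    · intro w hw hnl
      obtain ⟨z, hz⟩ := (mem_support _).mp hw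
      by_cases hwv : w = v₀
      · exfalso
        have hz2 := hz
        rw [hwv] at hz2
        have hz' : z ∈ (G.deleteEdges {s(u, v₀)}).neighborSet v₀ := hz2
        rw [nbrA_v₀ hv] at hz'
        exact hz'
      by_cases hwu : w = u
      · by_cases hlu : IsLeaf G u
        · exfalso
          obtain ⟨a, ha⟩ := Set.ncard_eq_one.mp hlu
          have hvm : v₀ ∈ G.neighborSet u := huv
          rw [ha] at hvm
          have hz2 := hz
          rw [hwu] at hz2
          have hz' : z ∈ (G.deleteEdges {s(u, v₀)}).neighborSet u := hz2
          rw [nbrA_u, ha] at hz'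
          have h1 : z = a := hz'.1
          have h2 : v₀ = a := hvm
          exact hz'.2 (h1.trans h2.symm)
        · have h3 := hint u ⟨v₀, huv⟩ hlu
          rw [hwu, hdeg']
          omega
      · have hnbr := nbrA_other (G := G) (v₀ := v₀) (u := u) hwu hwv
        have hz' : z ∈ G.neighborSet w := by
          have : z ∈ (G.deleteEdges {s(u, v₀)}).neighborSet w := hz
          rwa [hnbr] at this
        have hnl' : ¬ IsLeaf G w := fun h => hnl ((leafA_other hwu hwv).mpr h)
        have h3 := hint w ⟨z, hz'⟩ hnl'
        show 3 ≤ deg (G.deleteEdges {s(u, v₀)}) w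
        unfold deg
        rw [hnbr]
        exact h3
  · -- Case B : suppress the degree-3 node
    set G' := G.deleteEdges {s(u, v₀), s(u, p), s(u, q)} ⊔ fromEdgeSet {s(p, q)} with hG'def
    have hup : G.Adj u p := by rw [← mem_neighborSet, hNu]; simp
    have huq : G.Adj u q := by rw [← mem_neighborSet, hNu]; simp
    have hG' : ∀ a b, G'.Adj a b ↔ ((G.Adj a b ∧ s(a, b) ≠ s(u, v₀) ∧ s(a, b) ≠ s(u, p) ∧
        s(a, b) ≠ s(u, q)) ∨ s(a, b) = s(p, q)) := by
      intro a b
      have hab' : s(a, b) = s(p, q) → a ≠ b := by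
        intro h
        rcases Sym2.eq_iff.mp h with ⟨rfl, rfl⟩ | ⟨rfl, rfl⟩
        · exact hpq
        · exact hpq.symm
      rw [hG'def]
      simp only [sup_adj, deleteEdges_adj, fromEdgeSet_adj, Set.mem_insert_iff,
        Set.mem_singleton_iff]
      constructor
      · rintro (⟨h, hne⟩ | ⟨h, _⟩)
        · push_neg at hne
          exact Or.inl ⟨h, hne.1, hne.2.1, hne.2.2⟩
        · exact Or.inr h
      · rintro (⟨h, h1, h2, h3⟩ | h)
        · refine Or.inl ⟨h, ?_⟩
          push_neg
          exact ⟨h1, h2, h3⟩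
        · exact Or.inr ⟨h, hab' h⟩
    have hnadj : ¬ G.Adj p q := by
      intro h
      apply bridge p q h
      refine (SimpleGraph.Adj.reachable (deleteEdges_adj.mpr ⟨hup.symm, ?_⟩)).trans
        (SimpleGraph.Adj.reachable (deleteEdges_adj.mpr ⟨huq, ?_⟩))
      · simp only [Set.mem_singleton_iff]
        intro he
        rcases Sym2.eq_iff.mp he with ⟨_, h2⟩ | ⟨h1, _⟩
        · exact huq.ne h2
        · exact hpq h1
      · simp only [Set.mem_singleton_iff]
        intro he
        rcases Sym2.eq_iff.mp he with ⟨h1, _⟩ | ⟨h1, _⟩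
        · exact hup.ne h1
        · exact huq.ne h1
    have hNu2 : G.neighborSet u = {v₀, q, p} := by rw [hNu, Set.pair_comm p q]
    have hG'2 := hG'_swap hG'
    have hnadj2 : ¬ G.Adj q p := fun h => hnadj h.symm
    refine ⟨?_, ?_, fun Q hgood =>
      infoB hfin hv hNu hpq hpv hqv hnadj hψv hdeg3 hG' hgood⟩
    · rw [isAcyclic_iff_forall_edge_isBridge]
      intro e he
      induction e using Sym2.ind with
      | _ a b =>
        rw [mem_edgeSet] at he
        rw [isBridge_iff]
        refine fun hr => ?_
        rcases (hG' a b).mp he with ⟨hg, h3, h4, h5⟩ | hnew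
        · obtain ⟨hbu, hbv⟩ := endsB hv hNu hg.symm (ne_swap h3) (ne_swap h4) (ne_swap h5)
          have hb := (sideB0 hv hNu hpq hpv hqv hnadj hG' hg h3 h4 h5 b hbu hbv).mp hr.symm
          exact bridge a b hg hb.symm
        · rcases Sym2.eq_iff.mp hnew with ⟨h6, h7⟩ | ⟨h6, h7⟩
          · rw [h6, h7] at hr
            have hq' := (sideB1 hv hNu hpq hpv hqv hnadj hG' q huq.ne' hqv).mp hr.symm
            exact bridge u q huq hq'.symm
          · rw [h6, h7] at hr
            have hq' := (sideB1 hv hNu2 hpq.symm hqv hpv hnadj2 hG'2 p hup.ne' hpv).mp hr.symm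
            exact bridge u p hup hq'.symm
    · intro w hw hnl
      obtain ⟨z, hz⟩ := (mem_support _).mp hw
      by_cases hwu : w = u
      · subst hwu
        have hz' : z ∈ G'.neighborSet w := hz
        rw [nbrB_u hNu hG'] at hz'
        exact absurd hz' (Set.notMem_empty z)
      by_cases hwv : w = v₀
      · subst hwv
        have hz' : z ∈ G'.neighborSet w := hz
        rw [nbrB_v0 hv hpv hqv hG'] at hz'
        exact absurd hz' (Set.notMem_empty z)
      by_cases hwp : w = p
      · subst hwp
        have hd := degB_p hfin hNu hpq hpv hnadj hG'
        have hnl' : ¬ IsLeaf G w := fun h =>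
          hnl ((leafB hfin hv hNu hpq hpv hqv hnadj hdeg3 hG' w).mpr ⟨h, hwv⟩)
        have h3 := hint w ⟨u, hup.symm⟩ hnl'
        show 3 ≤ deg G' w
        rw [hd]
        exact h3
      by_cases hwq : w = q
      · subst hwq
        have hd := degB_p hfin hNu2 hpq.symm hqv hnadj2 hG'2
        have hnl' : ¬ IsLeaf G w := fun h =>
          hnl ((leafB hfin hv hNu hpq hpv hqv hnadj hdeg3 hG' w).mpr ⟨h, hwv⟩)
        have h3 := hint w ⟨u, huq.symm⟩ hnl'
        show 3 ≤ deg G' w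
        rw [hd]
        exact h3
      · have hnbr := nbrB_other hNu hwu hwv hwp hwq hG'
        have hz' : z ∈ G.neighborSet w := by
          have : z ∈ G'.neighborSet w := hz
          rwa [hnbr] at this
        have hnl' : ¬ IsLeaf G w := fun h =>
          hnl ((leafB hfin hv hNu hpq hpv hqv hnadj hdeg3 hG' w).mpr ⟨h, hwv⟩)
        have h3 := hint w ⟨z, hz'⟩ hnl'
        show 3 ≤ deg G' w
        unfold deg
        rw [hnbr]
        exact h3

private lemma good_of_done {G : SimpleGraph V} (hdone : ∀ v, IsLeaf G v → ψ v ≠ ℓ)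
    {Q : Quartet L} (hQ : Q ∈ infoContent G ψ) : ∀ pr ∈ Q, ℓ ∉ pr := by
  obtain ⟨s, t, _, a, b, c, d, hab, hcd, ha, hb, hc, hd, rfl⟩ := hQ
  have hlab : ∀ (m : L) (u' v' : V), m ∈ sideLabels G ψ u' v' → m ≠ ℓ := by
    rintro m u' v' ⟨w, hw, _, rfl⟩
    exact hdone w hw
  intro pr hpr hin
  rcases Sym2.mem_iff.mp hpr with rfl | rfl
  · rcases Sym2.mem_iff.mp hin with h | h
    · exact hlab a s t ha.1 h.symm
    · exact hlab b s t hb.1 h.symm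
  · rcases Sym2.mem_iff.mp hin with h | h
    · exact hlab c t s hc.1 h.symm
    · exact hlab d t s hd.1 h.symm

end StepMain

end Stmt17Aux


/-- If no quartet in `I(T)` involves the label `ℓ`, then the tree
obtained from `T` by deleting all leaves labeled `ℓ` (suppressing any resulting
degree-2 nodes, i.e. by repeatedly pruning `ℓ`-labeled leaves until none remain)
has the same information content as `T`. -/
theorem stmt17 (T : MulTree V L) (ℓ : L)
    (hno : ∀ q ∈ infoContent T.G T.ψ, ∀ p ∈ q, ℓ ∉ p)
    (H : SimpleGraph V)
    (hsteps : Relation.ReflTransGen (PruneLabelStep T.ψ ℓ) T.G H)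
    (hdone : ∀ v, IsLeaf H v → T.ψ v ≠ ℓ) :
    infoContent H T.ψ = infoContent T.G T.ψ := by
  have hfin := T.fin
  have key : ∀ A B : SimpleGraph V, Relation.ReflTransGen (PruneLabelStep T.ψ ℓ) A B →
      A.IsAcyclic → (∀ v ∈ A.support, ¬ IsLeaf A v → 3 ≤ deg A v) →
      ∀ Q : Quartet L, (∀ pr ∈ Q, ℓ ∉ pr) →
        (Q ∈ infoContent B T.ψ ↔ Q ∈ infoContent A T.ψ) := by
    intro A B h
    induction h using Relation.ReflTransGen.head_induction_on with
    | refl => exact fun _ _ _ _ => Iff.rfl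
    | head hstep htail ih =>
      intro h1 h2
      obtain ⟨h1', h2', hiff⟩ := stepMain hfin h1 h2 hstep
      exact fun Q hQ => (ih h1' h2' Q hQ).trans (hiff Q hQ)
  have hiff := key T.G H hsteps T.acyclic T.internal3
  ext Q
  constructor
  · intro hQ
    exact (hiff Q (good_of_done hdone hQ)).mp hQ
  · intro hQ
    refine (hiff Q ?_).mpr hQ
    intro pr hpr hin
    exact hno Q hQ pr hpr hin
end
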